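/- arXiv:1201.1996 — 2 statements merged into one kernel-verified Lean document; each statement's English description precedes it below -/
import Mathlib

section
/- Let S = (S_t)_{t∈[0,1]} be a bounded càdlàg adapted process. Then Var(S) = lim_{n→∞} Var(S, D_n); in particular the supremum over all partitions of the mean variation equals the (monotone) limit along the dyadic partitions. -/
open MeasureTheory Set Filter Topology

noncomputable section

namespace BD

variable {Ω : Type*} {m0 : MeasurableSpace Ω}

/-- The filtration is right-continuous. -/
def RightContinuousFiltration (ℱ : Filtration ℝ m0) : Prop :=
  ∀ t : ℝ, ℱ t = ⨅ s ∈ Set.Ioi t, ℱ s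

/-- `ℱ 0` contains all `P`-null sets. -/
def CompleteFiltration (ℱ : Filtration ℝ m0) (P : Measure Ω) : Prop :=
  ∀ s : Set Ω, P s = 0 → MeasurableSet[ℱ 0] s

/-- The usual conditions: right continuity and completeness. -/
def UsualConditions (ℱ : Filtration ℝ m0) (P : Measure Ω) : Prop :=
  RightContinuousFiltration ℱ ∧ CompleteFiltration ℱ P

/-- A real function is càdlàg on the time interval `[0,1]`: it is right-continuous on `[0,1)`
and has left limits on `(0,1]`. -/
def IsCadlagFun (f : ℝ → ℝ) : Prop :=
  (∀ t ∈ Set.Ico (0:ℝ) 1, ContinuousWithinAt f (Set.Ici t) t) ∧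
  (∀ t ∈ Set.Ioc (0:ℝ) 1, ∃ l : ℝ, Tendsto f (nhdsWithin t (Set.Iio t)) (nhds l))

/-- A process is càdlàg if all its paths are càdlàg on `[0,1]`. -/
def Cadlag (S : ℝ → Ω → ℝ) : Prop := ∀ ω, IsCadlagFun fun t => S t ω

/-- The process is adapted on the time interval `[0,1]`. -/
def AdaptedOn (ℱ : Filtration ℝ m0) (S : ℝ → Ω → ℝ) : Prop :=
  ∀ t ∈ Set.Icc (0:ℝ) 1, StronglyMeasurable[ℱ t] (S t)

/-- A `[0,1] ∪ {∞}`-valued random time (modelled as a `WithTop ℝ`-valued map) is a stopping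
time if `{ρ ≤ t} ∈ ℱ t` for every `t`. -/
def IsStoppingTimeTop (ℱ : Filtration ℝ m0) (ρ : Ω → WithTop ℝ) : Prop :=
  ∀ t : ℝ, MeasurableSet[ℱ t] {ω | ρ ω ≤ (t : WithTop ℝ)}

/-- The random time takes values in `[0,1] ∪ {∞}`. -/
def ValuedInUnitOrTop (ρ : Ω → WithTop ℝ) : Prop :=
  ∀ ω, ρ ω = ⊤ ∨ ∃ t ∈ Set.Icc (0:ℝ) 1, ρ ω = (t : WithTop ℝ)

/-- The process `S` stopped at the (possibly infinite) random time `ρ`. -/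
def stopped (S : ℝ → Ω → ℝ) (ρ : Ω → WithTop ℝ) : ℝ → Ω → ℝ :=
  fun t ω => S ((min (t : WithTop ℝ) (ρ ω)).untopD t) ω

/-- A simple integrand `H = ∑_{i=1}^k H^i 1_{(τ_i, τ_{i+1}]}` where the `τ_i` are `[0,1]`-valued
stopping times, increasing in `i`, and `H^i` is bounded and `ℱ_{τ_i}`-measurable. -/
structure SimpleIntegrand (ℱ : Filtration ℝ m0) where
  k : ℕ
  τ : Fin (k + 1) → Ω → ℝ
  τ_mono : ∀ ω, Monotone fun i => τ i ω
  τ_mem : ∀ i ω, τ i ω ∈ Set.Icc (0:ℝ) 1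
  τ_stopping : ∀ i, IsStoppingTime ℱ (fun ω => (τ i ω : WithTop ℝ))
  H : Fin k → Ω → ℝ
  H_bdd : ∀ i, ∃ C : ℝ, ∀ ω, |H i ω| ≤ C
  H_meas : ∀ i : Fin k,
    StronglyMeasurable[(τ_stopping i.castSucc).measurableSpace] (H i)

/-- The value of a simple integrand at time `t`. -/
def SimpleIntegrand.val {ℱ : Filtration ℝ m0} (Hs : SimpleIntegrand ℱ) (t : ℝ) (ω : Ω) : ℝ :=
  ∑ i : Fin Hs.k, if Hs.τ i.castSucc ω < t ∧ t ≤ Hs.τ i.succ ω then Hs.H i ω else 0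

/-- `c` is a uniform (sup-norm) bound for the simple integrand. -/
def SimpleIntegrand.BddBy {ℱ : Filtration ℝ m0} (Hs : SimpleIntegrand ℱ) (c : ℝ) : Prop :=
  ∀ t ω, |Hs.val t ω| ≤ c

/-- The elementary stochastic integral `I_S(H) = ∑ H^i (S_{τ_{i+1}} - S_{τ_i})`. -/
def elemIntegral {ℱ : Filtration ℝ m0} (S : ℝ → Ω → ℝ) (Hs : SimpleIntegrand ℱ) (ω : Ω) : ℝ :=
  ∑ i : Fin Hs.k, Hs.H i ω * (S (Hs.τ i.succ ω) ω - S (Hs.τ i.castSucc ω) ω)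

/-- `S` is a good integrator: `I_S` is continuous from the simple integrands (with the sup norm)
to `L⁰(P)`, i.e. `‖Hⁿ‖_∞ → 0` implies `I_S(Hⁿ) → 0` in probability. -/
def GoodIntegrator (ℱ : Filtration ℝ m0) (P : Measure Ω) (S : ℝ → Ω → ℝ) : Prop :=
  ∀ (Hs : ℕ → SimpleIntegrand ℱ) (c : ℕ → ℝ),
    (∀ n, (Hs n).BddBy (c n)) → Tendsto c atTop (nhds 0) →
    TendstoInMeasure P (fun n => elemIntegral S (Hs n)) atTop 0

/-- A submartingale on the time interval `[0,1]`. -/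
def SubmartingaleOn (ℱ : Filtration ℝ m0) (P : Measure Ω) (Y : ℝ → Ω → ℝ) : Prop :=
  AdaptedOn ℱ Y ∧ (∀ t ∈ Set.Icc (0:ℝ) 1, Integrable (Y t) P) ∧
    ∀ s t : ℝ, s ∈ Set.Icc (0:ℝ) 1 → t ∈ Set.Icc (0:ℝ) 1 → s ≤ t →
      ∀ᵐ ω ∂P, Y s ω ≤ (P[Y t | ℱ s]) ω

/-- A martingale on the time interval `[0,1]`. -/
def MartingaleOn (ℱ : Filtration ℝ m0) (P : Measure Ω) (Y : ℝ → Ω → ℝ) : Prop :=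
  AdaptedOn ℱ Y ∧ (∀ t ∈ Set.Icc (0:ℝ) 1, Integrable (Y t) P) ∧
    ∀ s t : ℝ, s ∈ Set.Icc (0:ℝ) 1 → t ∈ Set.Icc (0:ℝ) 1 → s ≤ t →
      (P[Y t | ℱ s]) =ᵐ[P] Y s

/-- A local martingale on `[0,1]`: for every `ε > 0` there is a `[0,1] ∪ {∞}`-valued stopping
time `ρ` with `P(ρ = ∞) ≥ 1 - ε` such that the stopped process is a martingale. -/
def IsLocalMartingaleOn (ℱ : Filtration ℝ m0) (P : Measure Ω) (M : ℝ → Ω → ℝ) : Prop :=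
  ∀ ε : ℝ, 0 < ε → ∃ ρ : Ω → WithTop ℝ, IsStoppingTimeTop ℱ ρ ∧ ValuedInUnitOrTop ρ ∧
    1 - ENNReal.ofReal ε ≤ P {ω | ρ ω = ⊤} ∧ MartingaleOn ℱ P (stopped M ρ)

/-- All paths of the process have finite total variation on `[0,1]`. -/
def FiniteVariationPaths (A : ℝ → Ω → ℝ) : Prop :=
  ∀ ω, BoundedVariationOn (fun t => A t ω) (Set.Icc (0:ℝ) 1)

/-- `S` is a semimartingale on `[0,1]`: it is (up to indistinguishability on `[0,1]`) the sum
of a càdlàg local martingale and a càdlàg adapted process of finite variation. -/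
def IsSemimartingaleOn (ℱ : Filtration ℝ m0) (P : Measure Ω) (S : ℝ → Ω → ℝ) : Prop :=
  ∃ M A : ℝ → Ω → ℝ, Cadlag M ∧ IsLocalMartingaleOn ℱ P M ∧
    Cadlag A ∧ AdaptedOn ℱ A ∧ FiniteVariationPaths A ∧
    ∀ᵐ ω ∂P, ∀ t ∈ Set.Icc (0:ℝ) 1, S t ω = M t ω + A t ω

/-- A partition `0 = t_0 < t_1 < … < t_n = 1` of `[0,1]`. -/
structure Partition where
  n : ℕ
  t : Fin (n + 1) → ℝ
  strictMono : StrictMono t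
  first : t 0 = 0
  last : t (Fin.last n) = 1

/-- The mean variation `Var(S, π) = E ∑_i |E[S_{t_{i+1}} - S_{t_i} | ℱ_{t_i}]|` of `S`
along the partition `π`. -/
def meanVar (ℱ : Filtration ℝ m0) (P : Measure Ω) (S : ℝ → Ω → ℝ) (π : Partition) : ℝ :=
  ∑ i : Fin π.n,
    ∫ ω, |(P[fun ω => S (π.t i.succ) ω - S (π.t i.castSucc) ω | ℱ (π.t i.castSucc)]) ω| ∂P

/-- The `n`-th dyadic partition `{0, 1/2ⁿ, …, 1}` of `[0,1]`. -/
def dyadicPartition (n : ℕ) : Partition where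
  n := 2 ^ n
  t := fun i => (i.val : ℝ) / 2 ^ n
  strictMono := by
    intro i j hij
    have h2 : (0:ℝ) < 2 ^ n := by positivity
    have h : (i.val : ℝ) < (j.val : ℝ) := by exact_mod_cast hij
    exact div_lt_div_of_pos_right h h2
  first := by simp
  last := by
    have h2 : (2:ℝ) ^ n ≠ 0 := by positivity
    simp [Fin.last, h2]

/-- The Riemann sum `∑_{i=0}^{2ⁿ-1} H_{i/2ⁿ} (S_{(i+1)/2ⁿ} - S_{i/2ⁿ})`. -/
def riemannSum (S H : ℝ → Ω → ℝ) (n : ℕ) (ω : Ω) : ℝ :=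
  ∑ i ∈ Finset.range (2 ^ n),
    H ((i : ℝ) / 2 ^ n) ω * (S (((i : ℝ) + 1) / 2 ^ n) ω - S ((i : ℝ) / 2 ^ n) ω)

/-- A bounded adapted process with continuous paths on `[0,1]`. -/
def BddContAdapted (ℱ : Filtration ℝ m0) (H : ℝ → Ω → ℝ) : Prop :=
  (∃ C : ℝ, ∀ t ∈ Set.Icc (0:ℝ) 1, ∀ ω, |H t ω| ≤ C) ∧ AdaptedOn ℱ H ∧
    ∀ ω, ContinuousOn (fun t => H t ω) (Set.Icc (0:ℝ) 1)

/-- `S` is a Riemann integrator: for every bounded adapted continuous process `H`, the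
Riemann sums along the dyadic partitions converge in probability. -/
def RiemannIntegrator (ℱ : Filtration ℝ m0) (P : Measure Ω) (S : ℝ → Ω → ℝ) : Prop :=
  ∀ H : ℝ → Ω → ℝ, BddContAdapted ℱ H →
    ∃ L : Ω → ℝ, TendstoInMeasure P (fun n => riemannSum S H n) atTop L

/-- An element of `ℰ_{D_n}`: a process `∑_{i=0}^{2ⁿ-1} H^i 1_{(i/2ⁿ, (i+1)/2ⁿ]}` with `H⁰ = 0`
and `H^i` bounded and `ℱ_{(i-1)/2ⁿ}`-measurable for `1 ≤ i ≤ 2ⁿ - 1`. -/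
structure DyadicIntegrand (ℱ : Filtration ℝ m0) where
  n : ℕ
  H : ℕ → Ω → ℝ
  H_zero : H 0 = fun _ => 0
  H_bdd : ∀ i, ∃ C : ℝ, ∀ ω, |H i ω| ≤ C
  H_meas : ∀ i : ℕ, 1 ≤ i → i < 2 ^ n →
    StronglyMeasurable[ℱ (((i : ℝ) - 1) / 2 ^ n)] (H i)

/-- The elementary integral of an element of `ℰ_{D_n}` against `S`. -/
def dyadicIntegral {ℱ : Filtration ℝ m0} (S : ℝ → Ω → ℝ) (D : DyadicIntegrand ℱ) (ω : Ω) : ℝ :=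
  ∑ i ∈ Finset.range (2 ^ D.n),
    D.H i ω * (S (((i : ℝ) + 1) / 2 ^ D.n) ω - S ((i : ℝ) / 2 ^ D.n) ω)

/-- `c` is a uniform bound for an element of `ℰ_{D_n}` (hence for its sup norm). -/
def DyadicIntegrand.BddBy {ℱ : Filtration ℝ m0} (D : DyadicIntegrand ℱ) (c : ℝ) : Prop :=
  ∀ i < 2 ^ D.n, ∀ ω, |D.H i ω| ≤ c

/-- The jump `ΔS_t = S_t - S_{t-}` of the process `S` at time `t`. -/
def jump (S : ℝ → Ω → ℝ) (t : ℝ) (ω : Ω) : ℝ :=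
  S t ω - Function.leftLim (fun s => S s ω) t

/-- The times `s ∈ (0, t]` at which `S` has a jump of size at least `1`. -/
def bigJumpTimes (S : ℝ → Ω → ℝ) (t : ℝ) (ω : Ω) : Set ℝ :=
  {s : ℝ | s ∈ Set.Ioc (0:ℝ) t ∧ 1 ≤ |jump S s ω|}

/-- The sum of the big jumps: `J_t = ∑_{0 < s ≤ t} ΔS_s 1_{|ΔS_s| ≥ 1}`. -/
def bigJumpPart (S : ℝ → Ω → ℝ) (t : ℝ) (ω : Ω) : ℝ :=
  ∑ᶠ s ∈ bigJumpTimes S t ω, jump S s ω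



section Aux

variable {ℱ : Filtration ℝ m0} {P : Measure Ω} [IsProbabilityMeasure P]
  {S : ℝ → Ω → ℝ} {C : ℝ}

omit [IsProbabilityMeasure P] in
lemma integrable_of_bdd_adapted (hC : ∀ t ω, |S t ω| ≤ C)
    (hadp : AdaptedOn ℱ S) [IsFiniteMeasure P] {t : ℝ} (ht : t ∈ Set.Icc (0:ℝ) 1) :
    Integrable (S t) P :=
  ⟨((hadp t ht).mono (ℱ.le t)).aestronglyMeasurable,
    HasFiniteIntegral.of_bounded (C := C) (ae_of_all _ fun ω => by
      simpa [Real.norm_eq_abs] using hC t ω)⟩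

lemma int_abs_condexp_mono {m1 m2 : MeasurableSpace Ω} (h12 : m1 ≤ m2) (h2 : m2 ≤ m0)
    (f : Ω → ℝ) : ∫ ω, |(P[f|m1]) ω| ∂P ≤ ∫ ω, |(P[f|m2]) ω| ∂P := by
  calc ∫ ω, |(P[f|m1]) ω| ∂P = ∫ ω, |(P[P[f|m2]|m1]) ω| ∂P :=
        integral_congr_ae (((condExp_condExp_of_le h12 h2 (f := f)).symm).mono fun ω hω => by
          simp only [hω])
    _ ≤ _ := integral_abs_condExp_le _

omit [IsProbabilityMeasure P] in
lemma integral_abs_sum_le {ι : Type*} (s : Finset ι) (h : ι → Ω → ℝ)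
    (hint : ∀ k ∈ s, Integrable (h k) P) :
    ∫ ω, |∑ k ∈ s, h k ω| ∂P ≤ ∑ k ∈ s, ∫ ω, |h k ω| ∂P := by
  calc ∫ ω, |∑ k ∈ s, h k ω| ∂P ≤ ∫ ω, ∑ k ∈ s, |h k ω| ∂P := by
        refine integral_mono ?_ ?_ fun ω => Finset.abs_sum_le_sum_abs _ _
        · exact (integrable_finset_sum s hint).abs
        · exact integrable_finset_sum s fun k hk => (hint k hk).abs
    _ = ∑ k ∈ s, ∫ ω, |h k ω| ∂P := integral_finset_sum s fun k hk => (hint k hk).abs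

omit [IsProbabilityMeasure P] in
lemma integral_add3 (f g h : Ω → ℝ) (hf : Integrable f P) (hg : Integrable g P)
    (hh : Integrable h P) :
    ∫ ω, (f ω + g ω + h ω) ∂P = (∫ ω, f ω ∂P) + (∫ ω, g ω ∂P) + ∫ ω, h ω ∂P := by
  have h1 : Integrable (fun ω => f ω + g ω) P := hf.add hg
  rw [integral_add h1 hh, integral_add hf hg]

lemma dyadic_mem_Icc {n k : ℕ} (hk : k ≤ 2 ^ n) : ((k : ℝ) / 2 ^ n) ∈ Set.Icc (0:ℝ) 1 := by
  constructor
  · positivity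
  · rw [div_le_one (by positivity)]
    exact_mod_cast hk

/-- Lemma A: if every point of `π` is a dyadic rational of level `n`, then the mean variation
along `π` is at most the mean variation along the `n`-th dyadic partition. -/
lemma meanVar_le_meanVar_dyadic (hC : ∀ t ω, |S t ω| ≤ C) (hadp : AdaptedOn ℱ S)
    (n : ℕ) (π : Partition) (j : Fin (π.n + 1) → ℕ)
    (hj : ∀ i, π.t i = (j i : ℝ) / 2 ^ n) :
    meanVar ℱ P S π ≤ meanVar ℱ P S (dyadicPartition n) := by
  have h2 : (0:ℝ) < 2 ^ n := by positivity
  have hjmono : StrictMono j := by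
    intro i i' h
    have h' := π.strictMono h
    rw [hj, hj, div_lt_div_iff_of_pos_right h2] at h'
    exact_mod_cast h'
  have hlast : j (Fin.last π.n) = 2 ^ n := by
    have h' := π.last
    rw [hj] at h'
    have : (j (Fin.last π.n) : ℝ) = 2 ^ n := by
      field_simp at h'; linarith
    exact_mod_cast this
  have hjle : ∀ i, j i ≤ 2 ^ n := fun i => hlast ▸ hjmono.monotone (Fin.le_last i)
  -- the increments and per-step mean variations
  set d : ℕ → Ω → ℝ := fun k ω => S ((↑(k + 1) : ℝ) / 2 ^ n) ω - S ((k : ℝ) / 2 ^ n) ω with hd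
  set g : ℕ → ℝ := fun k => ∫ ω, |(P[d k | ℱ ((k : ℝ) / 2 ^ n)]) ω| ∂P with hg
  have hd_int : ∀ k, k < 2 ^ n → Integrable (d k) P := fun k hk =>
    (integrable_of_bdd_adapted hC hadp (dyadic_mem_Icc hk)).sub
      (integrable_of_bdd_adapted hC hadp (dyadic_mem_Icc hk.le))
  have hg_nonneg : ∀ k, 0 ≤ g k := fun k => integral_nonneg fun ω => abs_nonneg _
  have hDn : meanVar ℱ P S (dyadicPartition n) = ∑ k ∈ Finset.range (2 ^ n), g k := by
    rw [meanVar, ← Fin.sum_univ_eq_sum_range (fun k => g k) (2 ^ n)]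
    exact Finset.sum_congr rfl fun i _ => by
      simp only [hg, hd, dyadicPartition, Fin.val_succ, Fin.coe_castSucc]
      rfl
  have hterm : ∀ i : Fin π.n,
      (∫ ω, |(P[fun ω => S (π.t i.succ) ω - S (π.t i.castSucc) ω | ℱ (π.t i.castSucc)]) ω| ∂P)
        ≤ ∑ k ∈ Finset.Ico (j i.castSucc) (j i.succ), g k := by
    intro i
    have hab : j i.castSucc < j i.succ := hjmono (Fin.castSucc_lt_succ (i := i))
    have hble : j i.succ ≤ 2 ^ n := hjle _
    rw [hj i.succ, hj i.castSucc]
    have hX : (fun ω => S ((j i.succ : ℝ) / 2 ^ n) ω - S ((j i.castSucc : ℝ) / 2 ^ n) ω)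
        = ∑ k ∈ Finset.Ico (j i.castSucc) (j i.succ), d k := by
      funext ω
      rw [Finset.sum_apply]
      rw [Finset.sum_Ico_eq_sub (fun k => d k ω) hab.le]
      simp only [hd]
      rw [Finset.sum_range_sub (f := fun k => S ((k : ℝ) / 2 ^ n) ω),
        Finset.sum_range_sub (f := fun k => S ((k : ℝ) / 2 ^ n) ω)]
      ring
    rw [hX]
    have hintk : ∀ k ∈ Finset.Ico (j i.castSucc) (j i.succ), Integrable (d k) P :=
      fun k hk => hd_int k (lt_of_lt_of_le (Finset.mem_Ico.1 hk).2 hble)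
    have hsum := condExp_finsetSum (μ := P) (m := ℱ ((j i.castSucc : ℝ) / 2 ^ n)) hintk
    calc ∫ ω, |(P[∑ k ∈ Finset.Ico (j i.castSucc) (j i.succ), d k |
            ℱ ((j i.castSucc : ℝ) / 2 ^ n)]) ω| ∂P
        = ∫ ω, |∑ k ∈ Finset.Ico (j i.castSucc) (j i.succ),
            (P[d k | ℱ ((j i.castSucc : ℝ) / 2 ^ n)]) ω| ∂P := by
          refine integral_congr_ae (hsum.mono fun ω hω => ?_)
          dsimp only
          rw [hω, Finset.sum_apply]
      _ ≤ ∑ k ∈ Finset.Ico (j i.castSucc) (j i.succ),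
            ∫ ω, |(P[d k | ℱ ((j i.castSucc : ℝ) / 2 ^ n)]) ω| ∂P :=
          integral_abs_sum_le _ _ fun k _ => integrable_condExp
      _ ≤ ∑ k ∈ Finset.Ico (j i.castSucc) (j i.succ), g k := by
          refine Finset.sum_le_sum fun k hk => ?_
          refine int_abs_condexp_mono (ℱ.mono ?_) (ℱ.le _) (d k)
          rw [div_le_div_iff_of_pos_right h2]
          exact_mod_cast (Finset.mem_Ico.1 hk).1
  -- sum the per-term bounds and tile the blocks into `range (2 ^ n)`
  have hdisjoint : ∀ i i' : Fin π.n, i < i' →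
      Disjoint (Finset.Ico (j i.castSucc) (j i.succ)) (Finset.Ico (j i'.castSucc) (j i'.succ)) := by
    intro i i' h
    have h1 : j i.succ ≤ j i'.castSucc := hjmono.monotone (by
      rw [Fin.succ_le_castSucc_iff]; exact h)
    refine Finset.disjoint_left.mpr fun k hk hk' => ?_
    rw [Finset.mem_Ico] at hk hk'
    omega
  have hpd : (↑(Finset.univ : Finset (Fin π.n)) : Set (Fin π.n)).PairwiseDisjoint
      (fun i => Finset.Ico (j i.castSucc) (j i.succ)) := by
    intro i _ i' _ hne
    rcases lt_or_gt_of_ne hne with h | h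
    · exact hdisjoint i i' h
    · exact (hdisjoint i' i h).symm
  calc meanVar ℱ P S π
      ≤ ∑ i : Fin π.n, ∑ k ∈ Finset.Ico (j i.castSucc) (j i.succ), g k :=
        Finset.sum_le_sum fun i _ => hterm i
    _ = ∑ k ∈ Finset.univ.biUnion (fun i : Fin π.n => Finset.Ico (j i.castSucc) (j i.succ)),
          g k := (Finset.sum_biUnion hpd).symm
    _ ≤ ∑ k ∈ Finset.range (2 ^ n), g k := by
        refine Finset.sum_le_sum_of_subset_of_nonneg ?_ fun k _ _ => hg_nonneg k
        intro k hk
        rw [Finset.mem_biUnion] at hk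
        obtain ⟨i, _, hk⟩ := hk
        rw [Finset.mem_Ico] at hk
        exact Finset.mem_range.2 (lt_of_lt_of_le hk.2 (hjle _))
    _ = meanVar ℱ P S (dyadicPartition n) := hDn.symm


/-- Per-term comparison: shifting both evaluation times and the conditioning time of one
increment to the right costs at most the `L¹` distances of the endpoint values. -/
lemma term_shift_le (hC : ∀ t ω, |S t ω| ≤ C) (hadp : AdaptedOn ℱ S)
    {t t' v v' : ℝ} (ht : t ∈ Set.Icc (0:ℝ) 1) (ht' : t' ∈ Set.Icc (0:ℝ) 1)
    (hv : v ∈ Set.Icc (0:ℝ) 1) (hv' : v' ∈ Set.Icc (0:ℝ) 1) (htv : t ≤ v) :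
    ∫ ω, |(P[fun ω => S t' ω - S t ω | ℱ t]) ω| ∂P ≤
      (∫ ω, |(P[fun ω => S v' ω - S v ω | ℱ v]) ω| ∂P)
      + (∫ ω, |S t' ω - S v' ω| ∂P) + ∫ ω, |S v ω - S t ω| ∂P := by
  have hint : ∀ r ∈ Set.Icc (0:ℝ) 1, Integrable (S r) P := fun r hr =>
    integrable_of_bdd_adapted hC hadp hr
  set Y : Ω → ℝ := fun ω => S v' ω - S v ω with hY
  set E1 : Ω → ℝ := fun ω => S t' ω - S v' ω with hE1
  set E2 : Ω → ℝ := fun ω => S v ω - S t ω with hE2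
  have hYi : Integrable Y P := (hint v' hv').sub (hint v hv)
  have hE1i : Integrable E1 P := (hint t' ht').sub (hint v' hv')
  have hE2i : Integrable E2 P := (hint v hv).sub (hint t ht)
  have hXeq : (fun ω => S t' ω - S t ω) = (Y + E1) + E2 := by
    funext ω; simp only [Pi.add_apply, hY, hE1, hE2]; ring
  have hsplit : P[fun ω => S t' ω - S t ω | ℱ v] =ᵐ[P]
      fun ω => (P[Y | ℱ v]) ω + (P[E1 | ℱ v]) ω + (P[E2 | ℱ v]) ω := by
    rw [hXeq]
    refine (condExp_add (hYi.add hE1i) hE2i _).trans ?_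
    filter_upwards [condExp_add (μ := P) (m := ℱ v) hYi hE1i] with ω hω
    simp only [Pi.add_apply] at hω ⊢
    rw [hω]
  calc ∫ ω, |(P[fun ω => S t' ω - S t ω | ℱ t]) ω| ∂P
      ≤ ∫ ω, |(P[fun ω => S t' ω - S t ω | ℱ v]) ω| ∂P :=
        int_abs_condexp_mono (ℱ.mono htv) (ℱ.le v) _
    _ = ∫ ω, |(P[Y | ℱ v]) ω + (P[E1 | ℱ v]) ω + (P[E2 | ℱ v]) ω| ∂P :=
        integral_congr_ae (hsplit.mono fun ω hω => by dsimp only; rw [hω])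
    _ ≤ ∫ ω, (|(P[Y | ℱ v]) ω| + |(P[E1 | ℱ v]) ω| + |(P[E2 | ℱ v]) ω|) ∂P := by
        refine integral_mono ?_ ?_ fun ω => (abs_add_le _ _).trans
          (add_le_add_left (abs_add_le _ _) _)
        · exact ((integrable_condExp.add integrable_condExp).add integrable_condExp).abs
        · exact (integrable_condExp.abs.add integrable_condExp.abs).add integrable_condExp.abs
    _ = (∫ ω, |(P[Y | ℱ v]) ω| ∂P) + (∫ ω, |(P[E1 | ℱ v]) ω| ∂P)
          + ∫ ω, |(P[E2 | ℱ v]) ω| ∂P :=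
        integral_add3 _ _ _ integrable_condExp.abs integrable_condExp.abs
          integrable_condExp.abs
    _ ≤ (∫ ω, |(P[Y | ℱ v]) ω| ∂P) + (∫ ω, |E1 ω| ∂P) + ∫ ω, |E2 ω| ∂P := by
        have h1 := integral_abs_condExp_le (μ := P) (m := ℱ v) E1
        have h2 := integral_abs_condExp_le (μ := P) (m := ℱ v) E2
        gcongr
    _ = _ := rfl

/-- Lemma B: the mean variation along any partition is dominated by the supremum of the
mean variations along the dyadic partitions. -/
lemma ofReal_meanVar_le_iSup (hC : ∀ t ω, |S t ω| ≤ C) (hadp : AdaptedOn ℱ S)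
    (hcad : Cadlag S) (π : Partition) :
    ENNReal.ofReal (meanVar ℱ P S π) ≤
      ⨆ n : ℕ, ENNReal.ofReal (meanVar ℱ P S (dyadicPartition n)) := by
  have hmem : ∀ i, π.t i ∈ Set.Icc (0:ℝ) 1 := fun i =>
    ⟨by rw [← π.first]; exact π.strictMono.monotone (Fin.zero_le i),
     by rw [← π.last]; exact π.strictMono.monotone (Fin.le_last i)⟩
  -- right dyadic approximations of the partition points
  set j : ℕ → Fin (π.n + 1) → ℕ := fun n i => ⌈π.t i * 2 ^ n⌉₊ with hjdef
  set u : ℕ → Fin (π.n + 1) → ℝ := fun n i => (j n i : ℝ) / 2 ^ n with hudef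
  have h2 : ∀ n : ℕ, (0:ℝ) < 2 ^ n := fun n => by positivity
  have hu_ge : ∀ n i, π.t i ≤ u n i := by
    intro n i
    rw [hudef, le_div_iff₀ (h2 n)]
    exact Nat.le_ceil _
  have hu_lt : ∀ n i, u n i < π.t i + 1 / 2 ^ n := by
    intro n i
    rw [hudef, div_lt_iff₀ (h2 n), add_mul, div_mul_cancel₀ _ (h2 n).ne']
    exact Nat.ceil_lt_add_one (mul_nonneg (hmem i).1 (h2 n).le)
  have hj_le : ∀ n i, j n i ≤ 2 ^ n := by
    intro n i
    rw [hjdef]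
    refine Nat.ceil_le.2 ?_
    push_cast
    calc π.t i * 2 ^ n ≤ 1 * 2 ^ n := by
          exact mul_le_mul_of_nonneg_right (hmem i).2 (h2 n).le
      _ = 2 ^ n := one_mul _
  have humem : ∀ n i, u n i ∈ Set.Icc (0:ℝ) 1 := fun n i => dyadic_mem_Icc (hj_le n i)
  have htendsto : ∀ i, Tendsto (fun n => u n i) atTop (𝓝 (π.t i)) := by
    intro i
    have hhalf : Tendsto (fun n : ℕ => 1 / (2:ℝ) ^ n) atTop (𝓝 0) := by
      simpa [one_div, inv_pow] using
        tendsto_pow_atTop_nhds_zero_of_lt_one (by norm_num : (0:ℝ) ≤ 2⁻¹)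
          (by norm_num : (2:ℝ)⁻¹ < 1)
    have hupper : Tendsto (fun n : ℕ => π.t i + 1 / (2:ℝ) ^ n) atTop (𝓝 (π.t i)) := by
      simpa using tendsto_const_nhds.add hhalf
    exact tendsto_of_tendsto_of_tendsto_of_le_of_le tendsto_const_nhds hupper
      (fun n => hu_ge n i) fun n => (hu_lt n i).le
  have hStend : ∀ (i : Fin (π.n + 1)) (ω : Ω),
      Tendsto (fun n => S (u n i) ω) atTop (𝓝 (S (π.t i) ω)) := by
    intro i ω
    by_cases hti : π.t i = 1
    · have hu1 : ∀ n, u n i = 1 := fun n =>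
        le_antisymm (humem n i).2 (by rw [← hti]; exact hu_ge n i)
      simp only [hu1, hti]
      exact tendsto_const_nhds
    · have ht01 : π.t i ∈ Set.Ico (0:ℝ) 1 := ⟨(hmem i).1, lt_of_le_of_ne (hmem i).2 hti⟩
      have hc := (hcad ω).1 (π.t i) ht01
      exact hc.tendsto.comp (tendsto_nhdsWithin_of_tendsto_nhds_of_eventually_within _
        (htendsto i) (Eventually.of_forall fun n => hu_ge n i))
  -- the L¹ errors tend to zero
  have hDCT : ∀ i : Fin (π.n + 1),
      Tendsto (fun n => ∫ ω, |S (π.t i) ω - S (u n i) ω| ∂P) atTop (𝓝 0) := by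
    intro i
    have h := tendsto_integral_of_dominated_convergence (μ := P)
      (F := fun n ω => |S (π.t i) ω - S (u n i) ω|) (f := fun _ => (0:ℝ))
      (bound := fun _ => C + C)
      (fun n => ((((hadp _ (hmem i)).mono (ℱ.le _)).sub
        ((hadp _ (humem n i)).mono (ℱ.le _))).measurable.abs).aestronglyMeasurable)
      (integrable_const _)
      (fun n => ae_of_all _ fun ω => by
        rw [Real.norm_eq_abs, abs_abs]
        exact (abs_sub _ _).trans (add_le_add (hC _ ω) (hC _ ω)))
      (ae_of_all _ fun ω => by
        have := (tendsto_const_nhds (x := S (π.t i) ω)).sub (hStend i ω)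
        simpa using this.abs)
    simpa using h
  set e : ℕ → ℝ := fun n => ∑ i : Fin π.n,
    ((∫ ω, |S (π.t i.succ) ω - S (u n i.succ) ω| ∂P)
      + ∫ ω, |S (u n i.castSucc) ω - S (π.t i.castSucc) ω| ∂P) with hedef
  have he0 : Tendsto e atTop (𝓝 0) := by
    have : Tendsto e atTop (𝓝 (∑ _i : Fin π.n, ((0:ℝ) + 0))) := by
      refine tendsto_finset_sum _ fun i _ => Tendsto.add (hDCT i.succ) ?_
      have h := hDCT i.castSucc
      refine h.congr fun n => integral_congr_ae (ae_of_all _ fun ω => ?_)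
      rw [abs_sub_comm]
    simpa using this
  -- positivity of the mesh
  have hn0 : 0 < π.n := by
    refine Nat.pos_of_ne_zero fun h => ?_
    have h1 := π.last
    have h0 := π.first
    have hlz : Fin.last π.n = 0 := by
      ext
      simp [Fin.last, h]
    rw [hlz, h0] at h1
    norm_num at h1
  have hne : (Finset.univ : Finset (Fin π.n)).Nonempty := by
    have : Nonempty (Fin π.n) := ⟨⟨0, hn0⟩⟩
    exact Finset.univ_nonempty
  set δ : ℝ := Finset.univ.inf' hne fun i : Fin π.n => π.t i.succ - π.t i.castSucc with hδdef
  have hδpos : 0 < δ := by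
    rw [hδdef, Finset.lt_inf'_iff]
    exact fun i _ => sub_pos.2 (π.strictMono (Fin.castSucc_lt_succ (i := i)))
  have hδle : ∀ i : Fin π.n, δ ≤ π.t i.succ - π.t i.castSucc := fun i =>
    Finset.inf'_le _ (Finset.mem_univ i)
  -- for `n` large, the approximated points form a partition
  have hmono_ev : ∀ᶠ n : ℕ in atTop, (1:ℝ) < 2 ^ n * δ := by
    have : Tendsto (fun n : ℕ => (2:ℝ) ^ n * δ) atTop atTop :=
      (tendsto_pow_atTop_atTop_of_one_lt (by norm_num : (1:ℝ) < 2)).atTop_mul_const hδpos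
    exact this.eventually_gt_atTop 1
  refine ENNReal.le_of_forall_pos_le_add fun ε hε _ => ?_
  have heε : ∀ᶠ n : ℕ in atTop, e n < (ε : ℝ) :=
    he0.eventually (gt_mem_nhds (by exact_mod_cast hε))
  obtain ⟨n, hn1, hn2⟩ := (hmono_ev.and heε).exists
  -- the approximating partition
  have hsm : StrictMono (u n) := by
    rw [Fin.strictMono_iff_lt_succ]
    intro i
    rw [hudef, div_lt_div_iff_of_pos_right (h2 n)]
    have hc : (j n i.castSucc : ℝ) < π.t i.castSucc * 2 ^ n + 1 :=
      Nat.ceil_lt_add_one (mul_nonneg (hmem _).1 (h2 n).le)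
    have hs : π.t i.succ * 2 ^ n ≤ (j n i.succ : ℝ) := Nat.le_ceil _
    have : π.t i.castSucc * 2 ^ n + 1 < π.t i.succ * 2 ^ n := by
      have := hδle i
      nlinarith [h2 n]
    linarith
  have hufirst : u n 0 = 0 := by
    simp [hudef, hjdef, π.first]
  have hulast : u n (Fin.last π.n) = 1 := by
    have hjl : j n (Fin.last π.n) = 2 ^ n := by
      rw [hjdef]
      dsimp only
      rw [π.last, one_mul]
      exact_mod_cast Nat.ceil_natCast (R := ℝ) (2 ^ n)
    rw [hudef]
    dsimp only
    rw [hjl]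
    push_cast
    field_simp
  set πn : Partition := ⟨π.n, u n, hsm, hufirst, hulast⟩ with hπn
  have hπn_t : ∀ i, πn.t i = u n i := fun _ => rfl
  have hA : meanVar ℱ P S πn ≤ meanVar ℱ P S (dyadicPartition n) :=
    meanVar_le_meanVar_dyadic hC hadp n πn (j n) fun i => rfl
  have hB : meanVar ℱ P S π ≤ meanVar ℱ P S πn + e n := by
    rw [meanVar, meanVar, hedef, ← Finset.sum_add_distrib]
    refine Finset.sum_le_sum fun i _ => ?_
    have h := term_shift_le (P := P) hC hadp (hmem i.castSucc) (hmem i.succ)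
      (humem n i.castSucc) (humem n i.succ) (hu_ge n i.castSucc)
    simp only [hπn_t]
    linarith [h]
  have hc2 : meanVar ℱ P S π ≤ meanVar ℱ P S (dyadicPartition n) + (ε : ℝ) := by
    have := hB.trans (add_le_add hA hn2.le)
    linarith
  calc ENNReal.ofReal (meanVar ℱ P S π)
      ≤ ENNReal.ofReal (meanVar ℱ P S (dyadicPartition n) + (ε : ℝ)) :=
        ENNReal.ofReal_le_ofReal hc2
    _ ≤ ENNReal.ofReal (meanVar ℱ P S (dyadicPartition n)) + ENNReal.ofReal (ε : ℝ) :=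
        ENNReal.ofReal_add_le
    _ ≤ (⨆ n : ℕ, ENNReal.ofReal (meanVar ℱ P S (dyadicPartition n))) + ε := by
        gcongr
        · exact le_iSup (fun n => ENNReal.ofReal (meanVar ℱ P S (dyadicPartition n))) n
        · exact le_of_eq ENNReal.ofReal_coe_nnreal

end Aux

/-- For a bounded càdlàg adapted process, the mean variation (the supremum
over all partitions) is the limit of the mean variations along the dyadic partitions. -/
theorem meanVar_tendsto_iSup
    (ℱ : Filtration ℝ m0) (P : Measure Ω) [IsProbabilityMeasure P]
    (hUC : UsualConditions ℱ P) (S : ℝ → Ω → ℝ)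
    (hS_bdd : ∃ C : ℝ, ∀ t ω, |S t ω| ≤ C)
    (hS_cadlag : Cadlag S) (hS_adapted : AdaptedOn ℱ S) :
    Tendsto (fun n : ℕ => ENNReal.ofReal (meanVar ℱ P S (dyadicPartition n))) atTop
      (nhds (⨆ π : Partition, ENNReal.ofReal (meanVar ℱ P S π))) := by
  obtain ⟨C, hC⟩ := hS_bdd
  have hmono : Monotone fun n : ℕ => ENNReal.ofReal (meanVar ℱ P S (dyadicPartition n)) := by
    refine monotone_nat_of_le_succ fun n => ENNReal.ofReal_le_ofReal ?_
    refine meanVar_le_meanVar_dyadic hC hS_adapted (n + 1) (dyadicPartition n)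
      (fun i => 2 * i.val) fun i => ?_
    show (i.val : ℝ) / 2 ^ n = ((2 * i.val : ℕ) : ℝ) / 2 ^ (n + 1)
    push_cast
    rw [pow_succ]
    field_simp
  have hlim := tendsto_atTop_iSup hmono
  have hsup : (⨆ n : ℕ, ENNReal.ofReal (meanVar ℱ P S (dyadicPartition n)))
      = ⨆ π : Partition, ENNReal.ofReal (meanVar ℱ P S π) :=
    le_antisymm
      (iSup_le fun n =>
        le_iSup (fun π : Partition => ENNReal.ofReal (meanVar ℱ P S π)) (dyadicPartition n))
      (iSup_le fun π => ofReal_meanVar_le_iSup hC hS_adapted hS_cadlag π)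
  rwa [hsup] at hlim

end BD
end
end

section
/- Let M = (M_t)_{t∈[0,1]} be a càdlàg square-integrable martingale, i.e. a martingale with E[M_t^2] < ∞ for all t. Then M is a good integrator: if (H^n) are simple integrands with ‖H^n‖_∞ → 0, then I_M(H^n) → 0 in probability (indeed E[I_M(H)^2] ≤ ‖H‖_∞^2 · E[M_1^2 − M_0^2] for every simple integrand H). -/
open MeasureTheory Set Filter Topology

noncomputable section

namespace BD

variable {Ω : Type*} {m0 : MeasurableSpace Ω}

/-! ### Auxiliary: projection of time to `[0,1]` -/

/-- Projection of `ℝ` onto `[0,1]`. -/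
def proj (t : ℝ) : ℝ := max 0 (min t 1)

lemma proj_mem (t : ℝ) : proj t ∈ Set.Icc (0:ℝ) 1 := by
  constructor
  · exact le_max_left _ _
  · exact max_le (by norm_num) (min_le_right _ _)

lemma proj_of_mem {t : ℝ} (ht : t ∈ Set.Icc (0:ℝ) 1) : proj t = t := by
  have h1 : min t 1 = t := min_eq_left ht.2
  simp [proj, h1, ht.1]

lemma proj_zero : proj 0 = 0 := proj_of_mem (by norm_num)

lemma proj_one : proj 1 = 1 := proj_of_mem (by norm_num)

lemma monotone_proj : Monotone proj := fun a b hab =>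
  max_le_max le_rfl (min_le_min hab le_rfl)

lemma continuous_proj : Continuous proj :=
  continuous_const.max (continuous_id.min continuous_const)

lemma proj_le {t : ℝ} (ht : 0 ≤ t) : proj t ≤ t :=
  max_le ht (min_le_left _ _)

lemma proj_of_one_le {t : ℝ} (ht : 1 ≤ t) : proj t = 1 := by
  have : min t 1 = 1 := min_eq_right ht
  simp [proj, this]

/-- The filtration reindexed through `proj`. -/
def G (ℱ : Filtration ℝ m0) : Filtration ℝ m0 where
  seq t := ℱ (proj t)
  mono' _ _ hst := ℱ.mono (monotone_proj hst)
  le' _ := ℱ.le _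

lemma G_apply (ℱ : Filtration ℝ m0) (t : ℝ) : G ℱ t = ℱ (proj t) := rfl

lemma G_eq_of_mem (ℱ : Filtration ℝ m0) {t : ℝ} (ht : t ∈ Set.Icc (0:ℝ) 1) :
    G ℱ t = ℱ t := by rw [G_apply, proj_of_mem ht]

/-- The process reindexed through `proj`. -/
def NN (M : ℝ → Ω → ℝ) : ℝ → Ω → ℝ := fun t ω => M (proj t) ω

lemma NN_of_mem {M : ℝ → Ω → ℝ} {t : ℝ} (ht : t ∈ Set.Icc (0:ℝ) 1) : NN M t = M t := by
  funext ω
  show M (proj t) ω = M t ω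
  rw [proj_of_mem ht]

lemma NN_one {M : ℝ → Ω → ℝ} : NN M 1 = M 1 := NN_of_mem (by norm_num)

lemma NN_zero {M : ℝ → Ω → ℝ} : NN M 0 = M 0 := NN_of_mem (by norm_num)

lemma martingale_NN {ℱ : Filtration ℝ m0} {P : Measure Ω} {M : ℝ → Ω → ℝ}
    (hM : MartingaleOn ℱ P M) : Martingale (NN M) (G ℱ) P := by
  constructor
  · intro t
    exact hM.1 (proj t) (proj_mem t)
  · intro s t hst
    exact hM.2.2 (proj s) (proj t) (proj_mem s) (proj_mem t) (monotone_proj hst)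

/-- Right-continuity of `NN M` on `[0,1]`. -/
lemma NN_rightCont {M : ℝ → Ω → ℝ} (hM : Cadlag M) (ω : Ω) {t : ℝ}
    (ht : t ∈ Set.Icc (0:ℝ) 1) :
    ContinuousWithinAt (fun s => NN M s ω) (Set.Ici t) t := by
  rcases eq_or_lt_of_le ht.2 with h1 | h1
  · -- t = 1 : constant to the right
    have hconst : ∀ s ∈ Set.Ici t, NN M s ω = M 1 ω := by
      intro s hs
      have : proj s = 1 := proj_of_one_le (h1 ▸ hs)
      simp [NN, this]
    refine (continuousWithinAt_const (b := M 1 ω)).congr hconst ?_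
    exact hconst t Set.self_mem_Ici
  · -- t ∈ [0,1)
    have hcont : ContinuousWithinAt (fun s => M s ω) (Set.Ici t) (proj t) := by
      rw [proj_of_mem ht]
      exact (hM ω).1 t ⟨ht.1, h1⟩
    have hmaps : Set.MapsTo proj (Set.Ici t) (Set.Ici t) := by
      intro s hs
      have := monotone_proj hs
      rwa [proj_of_mem ht] at this
    exact hcont.comp continuous_proj.continuousWithinAt hmaps

/-! ### Stopping times transfer between `ℱ` and `G ℱ` -/

lemma isStoppingTime_G {ℱ : Filtration ℝ m0} {τ : Ω → ℝ}
    (hτ : IsStoppingTime ℱ (fun ω => (τ ω : WithTop ℝ)))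
    (h01 : ∀ ω, τ ω ∈ Set.Icc (0:ℝ) 1) :
    IsStoppingTime (G ℱ) (fun ω => (τ ω : WithTop ℝ)) := by
  intro t
  simp only [WithTop.coe_le_coe]
  rcases lt_or_ge t 0 with ht | ht
  · have : {ω | τ ω ≤ t} = (∅ : Set Ω) := by
      ext ω; simp only [Set.mem_setOf_eq, Set.mem_empty_iff_false, iff_false, not_le]
      exact lt_of_lt_of_le ht (h01 ω).1
    rw [this]; exact @MeasurableSet.empty _ (G ℱ t)
  rcases le_or_gt t 1 with ht1 | ht1
  · have : G ℱ t = ℱ t := G_eq_of_mem ℱ ⟨ht, ht1⟩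
    rw [this]; simpa only [WithTop.coe_le_coe] using hτ t
  · have : {ω | τ ω ≤ t} = (Set.univ : Set Ω) := by
      ext ω; simp only [Set.mem_setOf_eq, Set.mem_univ, iff_true]
      exact le_trans (h01 ω).2 ht1.le
    rw [this]; exact @MeasurableSet.univ _ (G ℱ t)

lemma sup_of_one {ℱ' : Filtration ℝ m0} {τ : Ω → ℝ} (h1 : ∀ ω, τ ω ≤ 1) {s : Set Ω}
    (h : MeasurableSet[ℱ' 1] (s ∩ {ω | τ ω ≤ 1})) : MeasurableSet[⨆ t, ℱ' t] s := by
  have hs : s ∩ {ω | τ ω ≤ 1} = s := Set.inter_eq_self_of_subset_left (fun ω _ => h1 ω)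
  rw [hs] at h
  exact (le_iSup (fun t => ℱ' t) 1) s h

lemma measurableSpace_G_eq {ℱ : Filtration ℝ m0} {τ : Ω → ℝ}
    (hτ : IsStoppingTime ℱ (fun ω => (τ ω : WithTop ℝ)))
    (h01 : ∀ ω, τ ω ∈ Set.Icc (0:ℝ) 1) :
    (isStoppingTime_G hτ h01).measurableSpace = hτ.measurableSpace := by
  ext s
  rw [IsStoppingTime.measurableSet, IsStoppingTime.measurableSet]
  simp only [WithTop.coe_le_coe]
  constructor
  · rintro ⟨-, h⟩
    refine ⟨sup_of_one (fun ω => (h01 ω).2) ?_, fun t => ?_⟩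
    · have h1 := h 1
      rwa [G_eq_of_mem ℱ (by norm_num)] at h1
    rcases le_or_gt t 1 with ht1 | ht1
    · rcases lt_or_ge t 0 with ht0 | ht0
      · have : s ∩ {ω | τ ω ≤ t} = (∅ : Set Ω) := by
          ext ω
          simp only [Set.mem_inter_iff, Set.mem_setOf_eq, Set.mem_empty_iff_false, iff_false,
            not_and, not_le]
          exact fun _ => lt_of_lt_of_le ht0 (h01 ω).1
        rw [this]; exact @MeasurableSet.empty _ (ℱ t)
      · have := h t
        rwa [G_eq_of_mem ℱ ⟨ht0, ht1⟩] at this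
    · have h1 := h 1
      rw [G_eq_of_mem ℱ (by norm_num)] at h1
      have hset : s ∩ {ω | τ ω ≤ t} = s ∩ {ω | τ ω ≤ 1} := by
        ext ω
        simp only [Set.mem_inter_iff, Set.mem_setOf_eq, and_congr_right_iff]
        exact fun _ => ⟨fun _ => (h01 ω).2, fun h' => le_trans h' ht1.le⟩
      rw [hset]
      exact ℱ.mono ht1.le _ h1
  · rintro ⟨-, h⟩
    refine ⟨sup_of_one (fun ω => (h01 ω).2) ?_, fun t => ?_⟩
    · rw [G_eq_of_mem ℱ (by norm_num)]; exact h 1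
    rcases lt_or_ge t 0 with ht0 | ht0
    · have : s ∩ {ω | τ ω ≤ t} = (∅ : Set Ω) := by
        ext ω
        simp only [Set.mem_inter_iff, Set.mem_setOf_eq, Set.mem_empty_iff_false, iff_false,
          not_and, not_le]
        exact fun _ => lt_of_lt_of_le ht0 (h01 ω).1
      rw [this]; exact @MeasurableSet.empty _ (G ℱ t)
    rcases le_or_gt t 1 with ht1 | ht1
    · rw [G_eq_of_mem ℱ ⟨ht0, ht1⟩]; exact h t
    · have hset : s ∩ {ω | τ ω ≤ t} = s ∩ {ω | τ ω ≤ 1} := by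
        ext ω
        simp only [Set.mem_inter_iff, Set.mem_setOf_eq, and_congr_right_iff]
        exact fun _ => ⟨fun _ => (h01 ω).2, fun h' => le_trans h' ht1.le⟩
      rw [hset, G_apply, proj_of_one_le ht1.le]
      exact h 1

/-! ### Dyadic upper approximation of a stopping time -/

/-- The `n`-th dyadic upper approximation of a random time. -/
def dyad (τ : Ω → ℝ) (n : ℕ) : Ω → ℝ := fun ω => (⌈(2^n : ℝ) * τ ω⌉ : ℝ) / 2^n

variable {τ : Ω → ℝ}

lemma le_dyad (h0 : ∀ ω, 0 ≤ τ ω) (n : ℕ) (ω : Ω) : τ ω ≤ dyad τ n ω := by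
  have h2 : (0:ℝ) < 2^n := by positivity
  rw [dyad, le_div_iff₀ h2]
  calc τ ω * 2^n = 2^n * τ ω := by ring
  _ ≤ _ := Int.le_ceil _

lemma dyad_le_one (h1 : ∀ ω, τ ω ≤ 1) (n : ℕ) (ω : Ω) : dyad τ n ω ≤ 1 := by
  have h2 : (0:ℝ) < 2^n := by positivity
  rw [dyad, div_le_one h2]
  have : (⌈(2^n : ℝ) * τ ω⌉ : ℤ) ≤ (2^n : ℤ) := by
    apply Int.ceil_le.mpr
    push_cast
    calc (2:ℝ)^n * τ ω ≤ 2^n * 1 := by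
          exact mul_le_mul_of_nonneg_left (h1 ω) h2.le
    _ = 2^n := by ring
  calc ((⌈(2^n : ℝ) * τ ω⌉ : ℤ) : ℝ) ≤ ((2^n : ℤ) : ℝ) := by exact_mod_cast this
  _ = 2^n := by push_cast; ring

lemma dyad_nonneg (h0 : ∀ ω, 0 ≤ τ ω) (n : ℕ) (ω : Ω) : 0 ≤ dyad τ n ω :=
  le_trans (h0 ω) (le_dyad h0 n ω)

lemma dyad_le_add (n : ℕ) (ω : Ω) : dyad τ n ω ≤ τ ω + ((2:ℝ)^n)⁻¹ := by
  have h2 : (0:ℝ) < 2^n := by positivity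
  rw [dyad, div_le_iff₀ h2]
  have := (Int.ceil_lt_add_one ((2^n : ℝ) * τ ω)).le
  calc ((⌈(2^n : ℝ) * τ ω⌉ : ℤ) : ℝ) ≤ 2^n * τ ω + 1 := this
  _ = (τ ω + ((2:ℝ)^n)⁻¹) * 2^n := by field_simp

lemma dyad_antitone (ω : Ω) : Antitone fun n => dyad τ n ω := by
  apply antitone_nat_of_succ_le
  intro n
  have h2 : (0:ℝ) < 2^n := by positivity
  have h2' : (0:ℝ) < 2^(n+1) := by positivity
  rw [dyad, dyad, div_le_div_iff₀ h2' h2]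
  have hint : (⌈(2^(n+1) : ℝ) * τ ω⌉ : ℤ) ≤ 2 * ⌈(2^n : ℝ) * τ ω⌉ := by
    apply Int.ceil_le.mpr
    push_cast
    calc (2:ℝ)^(n+1) * τ ω = 2 * (2^n * τ ω) := by ring
    _ ≤ 2 * (⌈(2^n : ℝ) * τ ω⌉ : ℝ) := by
          exact mul_le_mul_of_nonneg_left (Int.le_ceil _) (by norm_num)
  calc ((⌈(2^(n+1) : ℝ) * τ ω⌉ : ℤ) : ℝ) * 2^n ≤ (2 * (⌈(2^n : ℝ) * τ ω⌉ : ℝ)) * 2^n := by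
        have : ((⌈(2^(n+1) : ℝ) * τ ω⌉ : ℤ) : ℝ) ≤ 2 * (⌈(2^n : ℝ) * τ ω⌉ : ℝ) := by
          exact_mod_cast hint
        exact mul_le_mul_of_nonneg_right this h2.le
  _ = (⌈(2^n : ℝ) * τ ω⌉ : ℝ) * 2^(n+1) := by ring

lemma dyad_tendsto (h0 : ∀ ω, 0 ≤ τ ω) (ω : Ω) :
    Tendsto (fun n => dyad τ n ω) atTop (𝓝 (τ ω)) := by
  have hup : Tendsto (fun n : ℕ => τ ω + ((2:ℝ)^n)⁻¹) atTop (𝓝 (τ ω)) := by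
    have : Tendsto (fun n : ℕ => ((2:ℝ)^n)⁻¹) atTop (𝓝 0) := by
      simp_rw [← inv_pow]
      exact tendsto_pow_atTop_nhds_zero_of_lt_one (by norm_num) (by norm_num)
    simpa using tendsto_const_nhds.add this
  exact tendsto_of_tendsto_of_tendsto_of_le_of_le tendsto_const_nhds hup
    (fun n => le_dyad h0 n ω) (fun n => dyad_le_add n ω)

lemma dyad_isStoppingTime {ℱ : Filtration ℝ m0}
    (hτ : IsStoppingTime (G ℱ) (fun ω => (τ ω : WithTop ℝ))) (n : ℕ) :
    IsStoppingTime (G ℱ) (fun ω => (dyad τ n ω : WithTop ℝ)) := by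
  intro t
  simp only [WithTop.coe_le_coe]
  have h2 : (0:ℝ) < 2^n := by positivity
  have hset : {ω | dyad τ n ω ≤ t} = {ω | τ ω ≤ (⌊(2^n : ℝ) * t⌋ : ℝ) / 2^n} := by
    ext ω
    simp only [Set.mem_setOf_eq, dyad]
    rw [div_le_iff₀ h2, le_div_iff₀ h2]
    constructor
    · intro h
      have h' : (⌈(2^n : ℝ) * τ ω⌉ : ℤ) ≤ ⌊(2^n : ℝ) * t⌋ := by
        apply Int.le_floor.mpr
        calc ((⌈(2^n : ℝ) * τ ω⌉ : ℤ) : ℝ) ≤ t * 2^n := h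
        _ = 2^n * t := by ring
      calc τ ω * 2^n = 2^n * τ ω := by ring
      _ ≤ ((⌈(2^n : ℝ) * τ ω⌉ : ℤ) : ℝ) := Int.le_ceil _
      _ ≤ ((⌊(2^n : ℝ) * t⌋ : ℤ) : ℝ) := by exact_mod_cast h'
    · intro h
      have h' : (⌈(2^n : ℝ) * τ ω⌉ : ℤ) ≤ ⌊(2^n : ℝ) * t⌋ := by
        apply Int.ceil_le.mpr
        calc (2^n : ℝ) * τ ω = τ ω * 2^n := by ring
        _ ≤ _ := h
      calc ((⌈(2^n : ℝ) * τ ω⌉ : ℤ) : ℝ) ≤ ((⌊(2^n : ℝ) * t⌋ : ℤ) : ℝ) := by exact_mod_cast h'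
      _ ≤ (2^n : ℝ) * t := Int.floor_le _
      _ = t * 2^n := by ring
  rw [hset]
  have hle : (⌊(2^n : ℝ) * t⌋ : ℝ) / 2^n ≤ t := by
    rw [div_le_iff₀ h2]
    calc ((⌊(2^n : ℝ) * t⌋ : ℤ) : ℝ) ≤ (2^n : ℝ) * t := Int.floor_le _
    _ = t * 2^n := by ring
  exact (G ℱ).mono hle _
    (by simpa only [WithTop.coe_le_coe] using hτ ((⌊(2^n : ℝ) * t⌋ : ℝ) / 2^n))

lemma dyad_countable_range (τ : Ω → ℝ) (n : ℕ) : (Set.range (dyad τ n)).Countable := by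
  have : Set.range (dyad τ n) ⊆ Set.range (fun z : ℤ => (z : ℝ) / 2^n) := by
    rintro x ⟨ω, rfl⟩
    exact ⟨⌈(2^n : ℝ) * τ ω⌉, rfl⟩
  exact (Set.countable_range _).mono this


/-! ### Right-continuity: the stopping σ-algebra from dyadic approximations -/

lemma measurableSet_stoppingTime_of_dyad {ℱ : Filtration ℝ m0} {P : Measure Ω}
    (hUC : UsualConditions ℱ P) {τ : Ω → ℝ}
    (hτ : IsStoppingTime (G ℱ) (fun ω => (τ ω : WithTop ℝ))) (h0 : ∀ ω, 0 ≤ τ ω)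
    (h1 : ∀ ω, τ ω ≤ 1) {s : Set Ω} (hs : ∀ n, MeasurableSet[(dyad_isStoppingTime hτ n).measurableSpace] s) :
    MeasurableSet[hτ.measurableSpace] s := by
  have hs' : ∀ (n : ℕ) (u : ℝ), MeasurableSet[G ℱ u] (s ∩ {ω | dyad τ n ω ≤ u}) :=
    fun n u => by
      simpa only [WithTop.coe_le_coe] using ((IsStoppingTime.measurableSet _ s).mp (hs n)).2 u
  have key : ∀ t : ℝ, 0 ≤ t → ∀ u : ℝ, t < u → MeasurableSet[ℱ u] (s ∩ {ω | τ ω ≤ t}) := by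
    intro t ht u hu
    obtain ⟨N, hN⟩ : ∃ N : ℕ, ((2:ℝ)^N)⁻¹ < u - t := by
      obtain ⟨N, hN⟩ := exists_pow_lt_of_lt_one (sub_pos.mpr hu) (by norm_num : (2:ℝ)⁻¹ < 1)
      exact ⟨N, by rwa [← inv_pow] ⟩
    have hset : s ∩ {ω | τ ω ≤ t} =
        ⋂ k : ℕ, (s ∩ {ω | dyad τ (k + N) ω ≤ t + ((2:ℝ)^(k + N))⁻¹}) := by
      apply Set.Subset.antisymm
      · intro ω hω
        refine Set.mem_iInter.mpr fun k => ⟨hω.1, ?_⟩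
        calc dyad τ (k + N) ω ≤ τ ω + ((2:ℝ)^(k+N))⁻¹ := dyad_le_add _ ω
        _ ≤ t + ((2:ℝ)^(k+N))⁻¹ := by
              have : τ ω ≤ t := hω.2; linarith
      · intro ω hω
        have hω' := Set.mem_iInter.mp hω
        refine ⟨(hω' 0).1, ?_⟩
        have hle : ∀ k : ℕ, τ ω ≤ t + ((2:ℝ)^(k+N))⁻¹ := fun k =>
          le_trans (le_dyad h0 _ ω) (hω' k).2
        have htt : Tendsto (fun k : ℕ => t + ((2:ℝ)^(k+N))⁻¹) atTop (𝓝 t) := by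
          have h2 : Tendsto (fun k : ℕ => ((2:ℝ)^k)⁻¹) atTop (𝓝 0) := by
            simp_rw [← inv_pow]
            exact tendsto_pow_atTop_nhds_zero_of_lt_one (by norm_num) (by norm_num)
          have h3 : Tendsto (fun k : ℕ => ((2:ℝ)^(k+N))⁻¹) atTop (𝓝 0) :=
            h2.comp (tendsto_add_atTop_nat N)
          simpa using tendsto_const_nhds.add h3
        exact ge_of_tendsto htt (Eventually.of_forall hle)
    rw [hset]
    apply MeasurableSet.iInter
    intro k
    have hvu : t + ((2:ℝ)^(k+N))⁻¹ ≤ u := by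
      have hmono : ((2:ℝ)^(k+N))⁻¹ ≤ ((2:ℝ)^N)⁻¹ := by
        apply inv_anti₀ (by positivity)
        exact pow_le_pow_right₀ (by norm_num) (Nat.le_add_left N k)
      linarith
    have hv0 : (0:ℝ) ≤ t + ((2:ℝ)^(k+N))⁻¹ := by positivity
    have hmem := hs' (k + N) (t + ((2:ℝ)^(k+N))⁻¹)
    rw [G_apply] at hmem
    exact ℱ.mono (le_trans (proj_le hv0) hvu) _ hmem
  have main1 : MeasurableSet[ℱ 1] s := by
    have := hs' 0 1
    have hset : s ∩ {ω | dyad τ 0 ω ≤ 1} = s := by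
      apply Set.inter_eq_self_of_subset_left
      intro ω _
      exact dyad_le_one h1 0 ω
    rw [hset, G_eq_of_mem ℱ (by norm_num : (1:ℝ) ∈ Set.Icc (0:ℝ) 1)] at this
    exact this
  have main : ∀ t : ℝ, 0 ≤ t → t ≤ 1 → MeasurableSet[ℱ t] (s ∩ {ω | τ ω ≤ t}) := by
    intro t ht ht1
    rcases eq_or_lt_of_le ht1 with h | h
    · subst h
      have hset : s ∩ {ω | τ ω ≤ 1} = s := by
        apply Set.inter_eq_self_of_subset_left
        intro ω _
        exact h1 ω
      rw [hset]; exact main1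
    · have hRC := hUC.1 t
      rw [hRC]
      rw [MeasurableSpace.measurableSet_iInf]
      intro u
      rw [MeasurableSpace.measurableSet_iInf]
      intro hu
      exact key t ht u hu
  rw [IsStoppingTime.measurableSet]
  refine ⟨sup_of_one h1 ?_, fun t => ?_⟩
  · rw [G_eq_of_mem ℱ (by norm_num)]; exact main 1 (by norm_num) le_rfl
  simp only [WithTop.coe_le_coe]
  rcases lt_or_ge t 0 with ht | ht
  · have : s ∩ {ω | τ ω ≤ t} = (∅ : Set Ω) := by
      ext ω
      simp only [Set.mem_inter_iff, Set.mem_setOf_eq, Set.mem_empty_iff_false, iff_false,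
        not_and, not_le]
      exact fun _ => lt_of_lt_of_le ht (h0 ω)
    rw [this]; exact @MeasurableSet.empty _ (G ℱ t)
  rcases le_or_gt t 1 with ht1 | ht1
  · rw [G_eq_of_mem ℱ ⟨ht, ht1⟩]
    exact main t ht ht1
  · have hset : s ∩ {ω | τ ω ≤ t} = s ∩ {ω | τ ω ≤ 1} := by
      ext ω
      simp only [Set.mem_inter_iff, Set.mem_setOf_eq, and_congr_right_iff]
      exact fun _ => ⟨fun _ => h1 ω, fun h' => le_trans h' ht1.le⟩
    rw [hset, G_apply, proj_of_one_le ht1.le]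
    exact main 1 (by norm_num) le_rfl

/-! ### Optional sampling for the càdlàg martingale -/

lemma stoppedValue_ae_eq_condexp {ℱ : Filtration ℝ m0} {P : Measure Ω}
    [IsProbabilityMeasure P]
    (hUC : UsualConditions ℱ P) {M : ℝ → Ω → ℝ}
    (hM_cadlag : Cadlag M) (hM_mart : MartingaleOn ℱ P M) {τ : Ω → ℝ}
    (hτ : IsStoppingTime (G ℱ) (fun ω => (τ ω : WithTop ℝ))) (h0 : ∀ ω, 0 ≤ τ ω)
    (h1 : ∀ ω, τ ω ≤ 1) :
    (fun ω => M (τ ω) ω) =ᵐ[P] P[M 1 | hτ.measurableSpace] := by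
  have hN : Martingale (NN M) (G ℱ) P := martingale_NN hM_mart
  have hN1 : NN M 1 = M 1 := NN_one
  have hN1_int : Integrable (NN M 1) P := by
    rw [hN1]; exact hM_mart.2.1 1 (by norm_num)
  set ρ : ℕ → Ω → ℝ := fun n => dyad τ n with hρ_def
  have hρ : ∀ n, IsStoppingTime (G ℱ) (fun ω => (ρ n ω : WithTop ℝ)) := fun n => dyad_isStoppingTime hτ n
  have hρ_le1 : ∀ n ω, ρ n ω ≤ 1 := fun n ω => dyad_le_one h1 n ω
  have hρ_le_m0 : ∀ n, (hρ n).measurableSpace ≤ m0 :=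
    fun n => (hρ n).measurableSpace_le_of_le (fun ω => WithTop.coe_le_coe.mpr (hρ_le1 n ω))
  set f : ℕ → Ω → ℝ := fun n => stoppedValue (NN M) (fun ω => (ρ n ω : WithTop ℝ)) with hf_def
  set g : Ω → ℝ := stoppedValue (NN M) (fun ω => (τ ω : WithTop ℝ)) with hg_def
  have key : ∀ n, f n =ᵐ[P] P[NN M 1 | (hρ n).measurableSpace] := fun n =>
    hN.stoppedValue_ae_eq_condExp_of_le_const_of_countable_range (hρ n)
      (fun ω => WithTop.coe_le_coe.mpr (hρ_le1 n ω))
      (((dyad_countable_range τ n).image (fun x : ℝ => (x : WithTop ℝ))).mono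
        (by rintro _ ⟨ω, rfl⟩; exact ⟨_, ⟨ω, rfl⟩, rfl⟩))
  have hconv : ∀ ω, Tendsto (fun n => f n ω) atTop (𝓝 (g ω)) := by
    intro ω
    have hcw := NN_rightCont hM_cadlag ω (t := τ ω) ⟨h0 ω, h1 ω⟩
    have hwithin : Tendsto (fun n => ρ n ω) atTop (𝓝[Set.Ici (τ ω)] (τ ω)) :=
      tendsto_nhdsWithin_of_tendsto_nhds_of_eventually_within _ (dyad_tendsto h0 ω)
        (Eventually.of_forall fun n => le_dyad h0 n ω)
    exact Tendsto.comp hcw hwithin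
  have hfn_aesm : ∀ n, AEStronglyMeasurable (f n) P := fun n =>
    ((stronglyMeasurable_condExp.mono (hρ_le_m0 n)).aestronglyMeasurable).congr (key n).symm
  have hg_mem : MemLp g 1 P := by
    have hg_aesm : AEStronglyMeasurable g P :=
      aestronglyMeasurable_of_tendsto_ae atTop hfn_aesm (Eventually.of_forall hconv)
    have hbound : ∀ n, eLpNorm (f n) 1 P ≤ eLpNorm (NN M 1) 1 P := fun n =>
      le_trans (le_of_eq (eLpNorm_congr_ae (key n))) (eLpNorm_one_condExp_le_eLpNorm _)
    have hsnorm : eLpNorm g 1 P ≤ eLpNorm (NN M 1) 1 P := by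
      refine le_trans (Lp.eLpNorm_lim_le_liminf_eLpNorm hfn_aesm g (Eventually.of_forall hconv)) ?_
      exact le_trans Filter.liminf_le_limsup
        (Filter.limsup_le_of_le (h := Eventually.of_forall hbound))
    exact ⟨hg_aesm, lt_of_le_of_lt hsnorm (memLp_one_iff_integrable.mpr hN1_int).2⟩
  have hg_int : Integrable g P := memLp_one_iff_integrable.mp hg_mem
  have hunif : UnifIntegrable f 1 P :=
    (hN1_int.uniformIntegrable_condExp hρ_le_m0).2.1.ae_eq (fun n => (key n).symm)
  have hL1 : Tendsto (fun n => eLpNorm (f n - g) 1 P) atTop (𝓝 0) :=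
    tendsto_Lp_finite_of_tendsto_ae le_rfl ENNReal.one_ne_top hfn_aesm hg_mem hunif
      (Eventually.of_forall hconv)
  -- a `hτ`-strongly measurable modification of `g`
  set U : Set Ω := ⋃ n, {ω | f n ω ≠ (P[NN M 1 | (hρ n).measurableSpace]) ω} with hU_def
  have hU0 : P U = 0 := measure_iUnion_null fun n => ae_iff.mp (key n)
  have hUF0 : MeasurableSet[ℱ 0] U := hUC.2 U hU0
  have hF0_le : ∀ {σ : Ω → ℝ} (hσ : IsStoppingTime (G ℱ) (fun ω => (σ ω : WithTop ℝ))), (∀ ω, 0 ≤ σ ω) →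
      (ℱ 0 : MeasurableSpace Ω) ≤ hσ.measurableSpace := by
    intro σ hσ hσ0
    have h := hσ.le_measurableSpace_of_const_le (i := 0) (fun ω => WithTop.coe_le_coe.mpr (hσ0 ω))
    rwa [G_eq_of_mem ℱ (by norm_num : (0:ℝ) ∈ Set.Icc (0:ℝ) 1)] at h
  have hUmeas : ∀ n, MeasurableSet[(hρ n).measurableSpace] U :=
    fun n => hF0_le (hρ n) (fun ω => dyad_nonneg h0 n ω) _ hUF0
  set q : ℕ → Ω → ℝ := fun n => Set.indicator Uᶜ (P[NN M 1 | (hρ n).measurableSpace]) with hq_def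
  set g' : Ω → ℝ := Set.indicator Uᶜ g with hg'_def
  have hq_meas : ∀ n, StronglyMeasurable[(hρ n).measurableSpace] (q n) := fun n =>
    stronglyMeasurable_condExp.indicator (hUmeas n).compl
  have hq_tendsto : ∀ ω, Tendsto (fun n => q n ω) atTop (𝓝 (g' ω)) := by
    intro ω
    by_cases hω : ω ∈ U
    · have h1' : ∀ n, q n ω = 0 := fun n => Set.indicator_of_notMem (by simpa using hω) _
      have h2' : g' ω = 0 := Set.indicator_of_notMem (by simpa using hω) _
      simp only [h1', h2']
      exact tendsto_const_nhds
    · have hmem : ω ∈ Uᶜ := by simpa using hω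
      have heq : ∀ n, f n ω = (P[NN M 1 | (hρ n).measurableSpace]) ω := by
        intro n
        by_contra hne
        exact hω (Set.mem_iUnion.mpr ⟨n, hne⟩)
      have h1' : ∀ n, q n ω = f n ω := fun n => by
        rw [hq_def]
        simp only []
        rw [Set.indicator_of_mem hmem, heq n]
      have h2' : g' ω = g ω := Set.indicator_of_mem hmem _
      rw [h2']
      simp only [h1']
      exact hconv ω
  have hg'_meas : ∀ k, StronglyMeasurable[(hρ k).measurableSpace] g' := by
    intro k
    refine stronglyMeasurable_of_tendsto (f := fun n => q (n + k)) atTop (fun n => ?_) ?_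
    · exact (hq_meas (n + k)).mono
        ((hρ (n + k)).measurableSpace_mono (hρ k)
          (fun ω => WithTop.coe_le_coe.mpr (dyad_antitone ω (Nat.le_add_left k n))))
    · rw [tendsto_pi_nhds]
      intro ω
      exact (hq_tendsto ω).comp (tendsto_add_atTop_nat k)
  have hg'_meas_τ : StronglyMeasurable[hτ.measurableSpace] g' := by
    apply Measurable.stronglyMeasurable
    intro t ht
    exact measurableSet_stoppingTime_of_dyad hUC hτ h0 h1
      (fun n => (hg'_meas n).measurable ht)
  have hgm : AEStronglyMeasurable[hτ.measurableSpace] g P := by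
    refine ⟨g', hg'_meas_τ, ?_⟩
    have hae : ∀ᵐ ω ∂P, ω ∉ U := measure_eq_zero_iff_ae_notMem.mp hU0
    filter_upwards [hae] with ω hω
    exact (Set.indicator_of_mem (by simpa using hω : ω ∈ Uᶜ) g).symm
  have hm : hτ.measurableSpace ≤ m0 := hτ.measurableSpace_le_of_le (fun ω => WithTop.coe_le_coe.mpr (h1 ω))
  have hint_eq : ∀ (A : Set Ω), MeasurableSet[hτ.measurableSpace] A →
      ∫ x in A, g x ∂P = ∫ x in A, NN M 1 x ∂P := by
    intro A hA
    have hAm0 : MeasurableSet A := hm _ hA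
    have hAn : ∀ n, MeasurableSet[(hρ n).measurableSpace] A :=
      fun n => (hτ.measurableSpace_mono (hρ n) (fun ω => WithTop.coe_le_coe.mpr (le_dyad h0 n ω))) _ hA
    have hconst : ∀ n, ∫ x in A, f n x ∂P = ∫ x in A, NN M 1 x ∂P := by
      intro n
      rw [setIntegral_congr_ae hAm0 ((key n).mono fun x hx _ => hx)]
      exact setIntegral_condExp (hρ_le_m0 n) hN1_int (hAn n)
    have htends : Tendsto (fun n => ∫ x in A, f n x ∂P) atTop (𝓝 (∫ x in A, g x ∂P)) :=
      tendsto_setIntegral_of_L1' g hg_int.1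
        (Eventually.of_forall fun n => integrable_condExp.congr (key n).symm) hL1 A
    exact tendsto_nhds_unique ((tendsto_congr hconst).mp htends) tendsto_const_nhds
  have final : g =ᵐ[P] P[NN M 1 | hτ.measurableSpace] :=
    ae_eq_condExp_of_forall_setIntegral_eq hm hN1_int
      (fun s _ _ => hg_int.integrableOn)
      (fun s hs _ => hint_eq s hs) hgm
  have hfun : (fun ω => M (τ ω) ω) = g := by
    funext ω
    show M (τ ω) ω = NN M (τ ω) ω
    rw [NN_of_mem ⟨h0 ω, h1 ω⟩]
  rw [hfun, ← hN1]
  exact final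

/-! ### L² helpers -/

lemma fin_telescope : ∀ {k : ℕ} (u : Fin (k+1) → ℝ),
    ∑ i : Fin k, (u i.succ - u i.castSucc) = u (Fin.last k) - u 0 := by
  intro k
  induction k with
  | zero =>
      intro u
      have : Fin.last 0 = 0 := rfl
      rw [this]
      simp
  | succ n ih =>
      intro u
      rw [Fin.sum_univ_castSucc]
      have h1 : ∀ i : Fin n, u (Fin.castSucc i).succ - u (Fin.castSucc i).castSucc
          = (u ∘ Fin.castSucc) i.succ - (u ∘ Fin.castSucc) i.castSucc := by
        intro i
        simp only [Function.comp_apply, Fin.succ_castSucc]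
      rw [Finset.sum_congr rfl (fun i _ => h1 i), ih (u ∘ Fin.castSucc)]
      simp only [Function.comp_apply, Fin.succ_last, Fin.castSucc_zero]
      ring

variable {P : Measure Ω}

lemma integrable_mul2 [IsFiniteMeasure P] {f g : Ω → ℝ} (hf : MemLp f 2 P)
    (hg : MemLp g 2 P) : Integrable (fun ω => f ω * g ω) P := by
  have hf2 : Integrable (fun ω => f ω ^ 2) P := (memLp_two_iff_integrable_sq hf.1).mp hf
  have hg2 : Integrable (fun ω => g ω ^ 2) P := (memLp_two_iff_integrable_sq hg.1).mp hg
  refine Integrable.mono' (hf2.add hg2) (hf.1.mul hg.1) (Eventually.of_forall fun ω => ?_)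
  simp only [Real.norm_eq_abs, Pi.add_apply]
  nlinarith [abs_mul (f ω) (g ω), sq_abs (f ω), sq_abs (g ω),
    sq_nonneg (|f ω| - |g ω|), abs_nonneg (f ω), abs_nonneg (g ω), abs_nonneg (f ω * g ω)]

lemma memL2_condexp {A : Type*} {m mA : MeasurableSpace A} {P : Measure A}
    [IsProbabilityMeasure P] (hm : m ≤ mA) {f : A → ℝ}
    (hf : MemLp f 2 P) : MemLp (P[f|m]) 2 P := by
  set fL : Lp ℝ 2 P := hf.toLp f with hfL
  have heq : ((condExpL2 ℝ ℝ hm fL : Lp ℝ 2 P) : A → ℝ) =ᵐ[P] P[f|m] := by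
    refine ae_eq_condExp_of_forall_setIntegral_eq hm (hf.integrable one_le_two)
      (fun s hs hμs => ?_) (fun s hs hμs => ?_) ?_
    · exact integrableOn_Lp_of_measure_ne_top (μ := P) _ fact_one_le_two_ennreal.elim hμs.ne
    · rw [integral_condExpL2_eq (𝕜 := ℝ) (E' := ℝ) hm fL hs hμs.ne]
      exact setIntegral_congr_ae (hm s hs) ((MemLp.coeFn_toLp hf).mono fun x hx _ => hx)
    · exact lpMeas.aestronglyMeasurable (condExpL2 ℝ ℝ hm fL)
  exact (Lp.memLp _).ae_eq heq

lemma integral_mul_eq_zero [IsProbabilityMeasure P] {m : MeasurableSpace Ω} (hm : m ≤ m0)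
    {Y X : Ω → ℝ} (hY : MemLp Y 2 P) (hYm : AEStronglyMeasurable[m] Y P)
    (hX : MemLp X 2 P) (hXc : P[X|m] =ᵐ[P] 0) :
    ∫ ω, Y ω * X ω ∂P = 0 := by
  have hInt : Integrable (Y * X) P := integrable_mul2 hY hX
  have h1 : P[Y * X|m] =ᵐ[P] Y * P[X|m] :=
    condExp_mul_of_aestronglyMeasurable_left hYm hInt (hX.integrable one_le_two)
  have h2 : P[Y * X|m] =ᵐ[P] 0 := by
    refine h1.trans ?_
    filter_upwards [hXc] with ω hω
    simp only [Pi.mul_apply, Pi.zero_apply, hω, mul_zero]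
  calc ∫ ω, Y ω * X ω ∂P = ∫ ω, (P[Y * X|m]) ω ∂P := (integral_condExp hm).symm
  _ = 0 := by rw [integral_congr_ae h2]; simp

lemma integral_sq_condexp_le [IsProbabilityMeasure P] {m : MeasurableSpace Ω} (hm : m ≤ m0)
    {Z W : Ω → ℝ} (hZ : MemLp Z 2 P) (hW : W =ᵐ[P] P[Z|m]) :
    ∫ ω, W ω ^ 2 ∂P ≤ ∫ ω, Z ω ^ 2 ∂P := by
  have hW2 : MemLp W 2 P := (memL2_condexp hm hZ).ae_eq hW.symm
  have hWm : AEStronglyMeasurable[m] W P := ⟨P[Z|m], stronglyMeasurable_condExp, hW⟩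
  have hdiff : MemLp (Z - W) 2 P := hZ.sub hW2
  have hcond : P[Z - W|m] =ᵐ[P] 0 := by
    have h1 : P[Z - W|m] =ᵐ[P] P[Z|m] - P[W|m] :=
      condExp_sub (hZ.integrable one_le_two) (hW2.integrable one_le_two) m
    have h2 : P[W|m] =ᵐ[P] P[Z|m] :=
      (condExp_congr_ae hW).trans (condExp_condExp_of_le le_rfl hm)
    refine h1.trans ?_
    filter_upwards [h2] with ω hω
    simp only [Pi.sub_apply, Pi.zero_apply, hω, sub_self]
  have hcross : ∫ ω, W ω * (Z ω - W ω) ∂P = 0 :=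
    integral_mul_eq_zero hm hW2 hWm hdiff hcond
  have hint2 : Integrable (fun ω => W ω ^ 2) P := (memLp_two_iff_integrable_sq hW2.1).mp hW2
  have hint3 : Integrable (fun ω => (Z ω - W ω) ^ 2) P := by
    have := (memLp_two_iff_integrable_sq hdiff.1).mp hdiff
    exact this
  have hint4 : Integrable (fun ω => W ω * (Z ω - W ω)) P := integrable_mul2 hW2 hdiff
  have hZeq : ∫ ω, Z ω ^ 2 ∂P
      = ∫ ω, ((Z ω - W ω) ^ 2 + (2 * (W ω * (Z ω - W ω)) + W ω ^ 2)) ∂P := by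
    apply integral_congr_ae
    exact Eventually.of_forall fun ω => by ring
  have e1 : ∫ ω, ((Z ω - W ω) ^ 2 + (2 * (W ω * (Z ω - W ω)) + W ω ^ 2)) ∂P
      = (∫ ω, (Z ω - W ω) ^ 2 ∂P) + ∫ ω, (2 * (W ω * (Z ω - W ω)) + W ω ^ 2) ∂P :=
    integral_add hint3 ((hint4.const_mul 2).add hint2)
  have e2 : ∫ ω, (2 * (W ω * (Z ω - W ω)) + W ω ^ 2) ∂P
      = (∫ ω, 2 * (W ω * (Z ω - W ω)) ∂P) + ∫ ω, W ω ^ 2 ∂P :=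
    integral_add (hint4.const_mul 2) hint2
  have e3 : ∫ ω, 2 * (W ω * (Z ω - W ω)) ∂P = 2 * ∫ ω, W ω * (Z ω - W ω) ∂P :=
    integral_const_mul 2 _
  have h5 : (0:ℝ) ≤ ∫ ω, (Z ω - W ω) ^ 2 ∂P := integral_nonneg fun ω => sq_nonneg _
  rw [hZeq, e1, e2, e3, hcross]
  linarith

/-- A càdlàg square-integrable martingale `M` is a good integrator, and
`E[I_M(H)²] ≤ ‖H‖_∞² E[M_1² - M_0²]` for every simple integrand `H`. -/
theorem sqIntegrable_martingale_goodIntegrator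
    (ℱ : Filtration ℝ m0) (P : Measure Ω) [IsProbabilityMeasure P]
    (hUC : UsualConditions ℱ P) (M : ℝ → Ω → ℝ)
    (hM_cadlag : Cadlag M) (hM_mart : MartingaleOn ℱ P M)
    (hM_sq : ∀ t ∈ Set.Icc (0:ℝ) 1, Integrable (fun ω => (M t ω) ^ 2) P) :
    GoodIntegrator ℱ P M ∧
      ∀ (Hs : SimpleIntegrand ℱ) (c : ℝ), Hs.BddBy c →
        ∫ ω, (elemIntegral M Hs ω) ^ 2 ∂P ≤
          c ^ 2 * ∫ ω, ((M 1 ω) ^ 2 - (M 0 ω) ^ 2) ∂P := by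
  classical
  have hM1_mem : MemLp (M 1) 2 P := (memLp_two_iff_integrable_sq
      ((hM_mart.1 1 (by norm_num)).mono (ℱ.le 1)).aestronglyMeasurable).mpr
      (hM_sq 1 (by norm_num))
  have hM1sq_int : Integrable (fun ω => M 1 ω ^ 2) P := hM_sq 1 (by norm_num)
  have hM0sq_int : Integrable (fun ω => M 0 ω ^ 2) P := hM_sq 0 (by norm_num)
  have main : ∀ (Hs : SimpleIntegrand ℱ) (c : ℝ), Hs.BddBy c →
      MemLp (elemIntegral M Hs) 2 P ∧
        ∫ ω, (elemIntegral M Hs ω) ^ 2 ∂P ≤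
          c ^ 2 * ∫ ω, ((M 1 ω) ^ 2 - (M 0 ω) ^ 2) ∂P := by
    intro Hs c hc
    set k := Hs.k with hk
    have hτmem : ∀ (i : Fin (k+1)) ω, Hs.τ i ω ∈ Set.Icc (0:ℝ) 1 := Hs.τ_mem
    have hG : ∀ i : Fin (k+1), IsStoppingTime (G ℱ) (fun ω => (Hs.τ i ω : WithTop ℝ)) := fun i =>
      isStoppingTime_G (Hs.τ_stopping i) (fun ω => hτmem i ω)
    set X : Fin (k+1) → Ω → ℝ := fun i ω => M (Hs.τ i ω) ω with hX
    have hm_le : ∀ i, (hG i).measurableSpace ≤ m0 := fun i =>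
      (hG i).measurableSpace_le_of_le (fun ω => WithTop.coe_le_coe.mpr (hτmem i ω).2)
    have hm_mono : ∀ {i j : Fin (k+1)}, i ≤ j →
        (hG i).measurableSpace ≤ (hG j).measurableSpace :=
      fun {i j} hij => (hG i).measurableSpace_mono (hG j) (fun ω => WithTop.coe_le_coe.mpr (Hs.τ_mono ω hij))
    have hXcond : ∀ i, X i =ᵐ[P] P[M 1 | (hG i).measurableSpace] := fun i =>
      stoppedValue_ae_eq_condexp hUC hM_cadlag hM_mart (hG i)
        (fun ω => (hτmem i ω).1) (fun ω => (hτmem i ω).2)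
    have hX2 : ∀ i, MemLp (X i) 2 P := fun i =>
      (memL2_condexp (hm_le i) hM1_mem).ae_eq (hXcond i).symm
    have hXm : ∀ i, AEStronglyMeasurable[(hG i).measurableSpace] (X i) P := fun i =>
      ⟨_, stronglyMeasurable_condExp, hXcond i⟩
    have hXproj : ∀ {i j : Fin (k+1)}, i ≤ j →
        P[X j | (hG i).measurableSpace] =ᵐ[P] X i := by
      intro i j hij
      calc P[X j | (hG i).measurableSpace]
          =ᵐ[P] P[P[M 1 | (hG j).measurableSpace] | (hG i).measurableSpace] :=
            condExp_congr_ae (hXcond j)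
        _ =ᵐ[P] P[M 1 | (hG i).measurableSpace] := condExp_condExp_of_le (hm_mono hij) (hm_le j)
        _ =ᵐ[P] X i := (hXcond i).symm
    set D : Fin k → Ω → ℝ := fun i ω => X i.succ ω - X i.castSucc ω with hD
    have hD2 : ∀ i, MemLp (D i) 2 P := fun i => (hX2 i.succ).sub (hX2 i.castSucc)
    have hDcond : ∀ i : Fin k, P[D i | (hG i.castSucc).measurableSpace] =ᵐ[P] 0 := by
      intro i
      have hsub : P[X i.succ - X i.castSucc | (hG i.castSucc).measurableSpace] =ᵐ[P]
          P[X i.succ | (hG i.castSucc).measurableSpace]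
            - P[X i.castSucc | (hG i.castSucc).measurableSpace] :=
        condExp_sub ((hX2 i.succ).integrable one_le_two)
          ((hX2 i.castSucc).integrable one_le_two) _
      refine hsub.trans ?_
      have h1 := hXproj (Fin.castSucc_lt_succ (i := i)).le
      have h2 := hXproj (le_refl i.castSucc)
      filter_upwards [h1, h2] with ω hω1 hω2
      simp only [Pi.sub_apply, Pi.zero_apply, hω1, hω2, sub_self]
    have hHmeas : ∀ i : Fin k,
        StronglyMeasurable[(hG i.castSucc).measurableSpace] (Hs.H i) := by
      intro i
      have h := Hs.H_meas i
      rwa [← measurableSpace_G_eq (Hs.τ_stopping i.castSucc)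
        (fun ω => hτmem i.castSucc ω)] at h
    set HD : Fin k → Ω → ℝ := fun i ω => Hs.H i ω * D i ω with hHD
    have hHb : ∀ (i : Fin k) (ω : Ω), Hs.τ i.castSucc ω < Hs.τ i.succ ω → |Hs.H i ω| ≤ c := by
      intro i ω hlt
      have hval := hc (Hs.τ i.succ ω) ω
      have hv : Hs.val (Hs.τ i.succ ω) ω = Hs.H i ω := by
        rw [SimpleIntegrand.val]
        rw [Finset.sum_eq_single i]
        · rw [if_pos ⟨hlt, le_rfl⟩]
        · intro j _ hji
          rw [if_neg]
          rintro ⟨hj1, hj2⟩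
          rcases lt_or_gt_of_ne hji with hj | hj
          · have hle : Hs.τ j.succ ω ≤ Hs.τ i.castSucc ω :=
              Hs.τ_mono ω (Fin.succ_le_castSucc_iff.mpr hj)
            exact absurd (le_trans hj2 hle) (not_le.mpr hlt)
          · have hle : Hs.τ i.succ ω ≤ Hs.τ j.castSucc ω :=
              Hs.τ_mono ω (Fin.succ_le_castSucc_iff.mpr hj)
            exact absurd hle (not_le.mpr hj1)
        · intro hmem
          exact absurd (Finset.mem_univ i) hmem
      rw [hv] at hval
      exact hval
    have hHD_le : ∀ (i : Fin k) (ω : Ω), |HD i ω| ≤ c * |D i ω| := by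
      intro i ω
      rcases lt_or_ge (Hs.τ i.castSucc ω) (Hs.τ i.succ ω) with hlt | hle
      · simp only [hHD]
        rw [abs_mul]
        exact mul_le_mul_of_nonneg_right (hHb i ω hlt) (abs_nonneg _)
      · have heq : Hs.τ i.succ ω = Hs.τ i.castSucc ω :=
          le_antisymm hle (Hs.τ_mono ω (Fin.castSucc_lt_succ (i := i)).le)
        have hD0 : D i ω = 0 := by
          simp only [hD, hX, heq, sub_self]
        simp only [hHD, hD0, mul_zero, abs_zero, le_refl]
    have hHD2 : ∀ i, MemLp (HD i) 2 P := by
      intro i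
      obtain ⟨Ci, hCi⟩ := Hs.H_bdd i
      refine MemLp.of_le_mul (c := Ci) (hD2 i)
        ((((hHmeas i).mono (hm_le i.castSucc)).aestronglyMeasurable).mul (hD2 i).1)
        (Eventually.of_forall fun ω => ?_)
      simp only [Real.norm_eq_abs, hHD]
      rw [abs_mul]
      exact mul_le_mul_of_nonneg_right (hCi ω) (abs_nonneg _)
    have hcross : ∀ i j : Fin k, i < j → ∫ ω, HD i ω * HD j ω ∂P = 0 := by
      intro i j hij
      obtain ⟨Cj, hCj⟩ := Hs.H_bdd j
      have hY2 : MemLp (fun ω => HD i ω * Hs.H j ω) 2 P := by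
        refine MemLp.of_le_mul (c := Cj) (hHD2 i)
          ((hHD2 i).1.mul ((hHmeas j).mono (hm_le j.castSucc)).aestronglyMeasurable)
          (Eventually.of_forall fun ω => ?_)
        simp only [Real.norm_eq_abs]
        rw [abs_mul, mul_comm Cj _]
        exact mul_le_mul_of_nonneg_left (hCj ω) (abs_nonneg _)
      have hi1 : i.castSucc ≤ j.castSucc := Fin.castSucc_le_castSucc_iff.mpr hij.le
      have hi2 : i.succ ≤ j.castSucc := Fin.succ_le_castSucc_iff.mpr hij
      have hYm : AEStronglyMeasurable[(hG j.castSucc).measurableSpace]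
          (fun ω => HD i ω * Hs.H j ω) P := by
        refine ⟨fun ω => (Hs.H i ω * ((P[M 1|(hG i.succ).measurableSpace]) ω -
            (P[M 1|(hG i.castSucc).measurableSpace]) ω)) * Hs.H j ω, ?_, ?_⟩
        · refine (((hHmeas i).mono (hm_mono hi1)).mul
            (((stronglyMeasurable_condExp).mono (hm_mono hi2)).sub
              ((stronglyMeasurable_condExp).mono (hm_mono hi1)))).mul (hHmeas j)
        · filter_upwards [hXcond i.succ, hXcond i.castSucc] with ω h1 h2
          simp only [hHD, hD]
          rw [h1, h2]
      have h0' := integral_mul_eq_zero (hm_le j.castSucc) hY2 hYm (hD2 j) (hDcond j)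
      calc ∫ ω, HD i ω * HD j ω ∂P
          = ∫ ω, (HD i ω * Hs.H j ω) * D j ω ∂P := by
            apply integral_congr_ae
            apply Eventually.of_forall
            intro ω
            simp only [hHD]
            ring
        _ = 0 := h0'
    have hdiag_le : ∀ i : Fin k, ∫ ω, HD i ω ^ 2 ∂P ≤ c^2 * ∫ ω, D i ω ^ 2 ∂P := by
      intro i
      have hint1 : Integrable (fun ω => HD i ω ^ 2) P :=
        (memLp_two_iff_integrable_sq (hHD2 i).1).mp (hHD2 i)
      have hint2 : Integrable (fun ω => D i ω ^ 2) P :=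
        (memLp_two_iff_integrable_sq (hD2 i).1).mp (hD2 i)
      rw [← integral_const_mul]
      refine integral_mono hint1 (hint2.const_mul _) fun ω => ?_
      have h := hHD_le i ω
      nlinarith [mul_self_le_mul_self (abs_nonneg (HD i ω)) h, sq_abs (HD i ω),
        sq_abs (D i ω), abs_nonneg (D i ω)]
    have hdiag_id : ∀ i : Fin k, ∫ ω, D i ω ^ 2 ∂P =
        ∫ ω, X i.succ ω ^ 2 ∂P - ∫ ω, X i.castSucc ω ^ 2 ∂P := by
      intro i
      have hcross0 : ∫ ω, X i.castSucc ω * D i ω ∂P = 0 :=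
        integral_mul_eq_zero (hm_le i.castSucc) (hX2 i.castSucc) (hXm i.castSucc)
          (hD2 i) (hDcond i)
      have hint_s : Integrable (fun ω => X i.succ ω ^ 2) P :=
        (memLp_two_iff_integrable_sq (hX2 _).1).mp (hX2 _)
      have hint_c : Integrable (fun ω => X i.castSucc ω ^ 2) P :=
        (memLp_two_iff_integrable_sq (hX2 _).1).mp (hX2 _)
      have hint_m : Integrable (fun ω => X i.castSucc ω * D i ω) P :=
        integrable_mul2 (hX2 i.castSucc) (hD2 i)
      have hpt : ∫ ω, D i ω ^ 2 ∂P = ∫ ω, (X i.succ ω ^ 2 - X i.castSucc ω ^ 2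
          - 2 * (X i.castSucc ω * D i ω)) ∂P := by
        apply integral_congr_ae
        apply Eventually.of_forall
        intro ω
        simp only [hD]
        ring
      have e1 : ∫ ω, (X i.succ ω ^ 2 - X i.castSucc ω ^ 2
          - 2 * (X i.castSucc ω * D i ω)) ∂P
          = (∫ ω, (X i.succ ω ^ 2 - X i.castSucc ω ^ 2) ∂P)
            - ∫ ω, 2 * (X i.castSucc ω * D i ω) ∂P :=
        integral_sub (hint_s.sub hint_c) (hint_m.const_mul 2)
      have e2 : ∫ ω, (X i.succ ω ^ 2 - X i.castSucc ω ^ 2) ∂P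
          = (∫ ω, X i.succ ω ^ 2 ∂P) - ∫ ω, X i.castSucc ω ^ 2 ∂P :=
        integral_sub hint_s hint_c
      have e3 : ∫ ω, 2 * (X i.castSucc ω * D i ω) ∂P
          = 2 * ∫ ω, X i.castSucc ω * D i ω ∂P := integral_const_mul 2 _
      rw [hpt, e1, e2, e3, hcross0]
      ring
    have htel : ∑ i : Fin k, ((∫ ω, X i.succ ω ^ 2 ∂P) - ∫ ω, X i.castSucc ω ^ 2 ∂P)
        = (∫ ω, X (Fin.last k) ω ^ 2 ∂P) - ∫ ω, X 0 ω ^ 2 ∂P :=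
      fin_telescope (fun j => ∫ ω, X j ω ^ 2 ∂P)
    have htop : ∫ ω, X (Fin.last k) ω ^ 2 ∂P ≤ ∫ ω, M 1 ω ^ 2 ∂P :=
      integral_sq_condexp_le (hm_le (Fin.last k)) hM1_mem (hXcond (Fin.last k))
    have hbot : ∫ ω, M 0 ω ^ 2 ∂P ≤ ∫ ω, X 0 ω ^ 2 ∂P := by
      refine integral_sq_condexp_le ((G ℱ).le 0) (hX2 0) ?_
      have hle0 : ((G ℱ) 0 : MeasurableSpace Ω) ≤ (hG 0).measurableSpace :=
        (hG 0).le_measurableSpace_of_const_le (i := 0) (fun ω => WithTop.coe_le_coe.mpr (hτmem 0 ω).1)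
      have h1 : P[X 0 | (G ℱ) 0] =ᵐ[P] P[P[M 1 | (hG 0).measurableSpace] | (G ℱ) 0] :=
        condExp_congr_ae (hXcond 0)
      have h2 : P[P[M 1 | (hG 0).measurableSpace] | (G ℱ) 0] =ᵐ[P] P[M 1 | (G ℱ) 0] :=
        condExp_condExp_of_le hle0 (hm_le 0)
      have h3 : P[M 1 | (G ℱ) 0] =ᵐ[P] M 0 := by
        have h := (martingale_NN hM_mart).condExp_ae_eq (zero_le_one (α := ℝ))
        rwa [NN_one, NN_zero] at h
      exact (h1.trans (h2.trans h3)).symm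
    have helemEq : ∀ ω, elemIntegral M Hs ω = ∑ i : Fin k, HD i ω := by
      intro ω
      rw [elemIntegral]
    have hI2 : MemLp (elemIntegral M Hs) 2 P := by
      have heq : elemIntegral M Hs = fun ω => ∑ i ∈ Finset.univ, HD i ω := by
        funext ω
        exact helemEq ω
      rw [heq]
      exact memLp_finsetSum _ (fun i _ => hHD2 i)
    have hIexp : ∫ ω, (elemIntegral M Hs ω) ^ 2 ∂P
        = ∑ i : Fin k, ∑ j : Fin k, ∫ ω, HD i ω * HD j ω ∂P := by
      have h1 : ∀ ω, (elemIntegral M Hs ω) ^ 2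
          = ∑ i : Fin k, ∑ j : Fin k, HD i ω * HD j ω := by
        intro ω
        rw [helemEq ω, sq, Finset.sum_mul_sum]
      rw [integral_congr_ae (Eventually.of_forall h1), integral_finset_sum]
      · apply Finset.sum_congr rfl
        intro i _
        rw [integral_finset_sum]
        intro j _
        exact integrable_mul2 (hHD2 i) (hHD2 j)
      · intro i _
        exact integrable_finset_sum _ (fun j _ => integrable_mul2 (hHD2 i) (hHD2 j))
    have hdiagsum : ∑ i : Fin k, ∑ j : Fin k, ∫ ω, HD i ω * HD j ω ∂P
        = ∑ i : Fin k, ∫ ω, HD i ω ^ 2 ∂P := by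
      apply Finset.sum_congr rfl
      intro i _
      rw [Finset.sum_eq_single i]
      · apply integral_congr_ae
        apply Eventually.of_forall
        intro ω
        ring
      · intro j _ hji
        rcases lt_or_gt_of_ne (Ne.symm hji) with hj | hj
        · exact hcross i j hj
        · rw [← hcross j i hj]
          apply integral_congr_ae
          apply Eventually.of_forall
          intro ω
          ring
      · intro hmem
        exact absurd (Finset.mem_univ i) hmem
    refine ⟨hI2, ?_⟩
    calc ∫ ω, (elemIntegral M Hs ω) ^ 2 ∂P
        = ∑ i : Fin k, ∫ ω, HD i ω ^ 2 ∂P := by rw [hIexp, hdiagsum]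
      _ ≤ ∑ i : Fin k, c^2 * ∫ ω, D i ω ^ 2 ∂P :=
          Finset.sum_le_sum (fun i _ => hdiag_le i)
      _ = c^2 * ∑ i : Fin k, ((∫ ω, X i.succ ω ^ 2 ∂P) - ∫ ω, X i.castSucc ω ^ 2 ∂P) := by
          rw [Finset.mul_sum]
          apply Finset.sum_congr rfl
          intro i _
          rw [hdiag_id i]
      _ = c^2 * ((∫ ω, X (Fin.last k) ω ^ 2 ∂P) - ∫ ω, X 0 ω ^ 2 ∂P) := by rw [htel]
      _ ≤ c^2 * ((∫ ω, M 1 ω ^ 2 ∂P) - ∫ ω, M 0 ω ^ 2 ∂P) :=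
          mul_le_mul_of_nonneg_left (sub_le_sub htop hbot) (sq_nonneg c)
      _ = c ^ 2 * ∫ ω, ((M 1 ω) ^ 2 - (M 0 ω) ^ 2) ∂P := by
          rw [integral_sub hM1sq_int hM0sq_int]
  refine ⟨?_, fun Hs c hc => (main Hs c hc).2⟩
  intro HsSeq cs hBdd hcs
  set K : ℝ := ∫ ω, ((M 1 ω) ^ 2 - (M 0 ω) ^ 2) ∂P with hK
  have hmain := fun n => main (HsSeq n) (cs n) (hBdd n)
  have haesm : ∀ n, AEStronglyMeasurable (elemIntegral M (HsSeq n)) P := fun n => (hmain n).1.1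
  refine tendstoInMeasure_of_tendsto_eLpNorm (p := 2) two_ne_zero haesm
    aestronglyMeasurable_const ?_
  have hfun : (fun n => eLpNorm (elemIntegral M (HsSeq n) - 0) 2 P)
      = fun n => eLpNorm (elemIntegral M (HsSeq n)) 2 P := by
    funext n
    rw [sub_zero]
  rw [hfun]
  have hle : ∀ n, eLpNorm (elemIntegral M (HsSeq n)) 2 P
      ≤ ENNReal.ofReal ((cs n)^2 * K) ^ (1/2 : ℝ) := by
    intro n
    have hint : Integrable (fun ω => (elemIntegral M (HsSeq n) ω) ^ 2) P :=
      (memLp_two_iff_integrable_sq (haesm n)).mp (hmain n).1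
    have hpt : ∀ ω, ‖elemIntegral M (HsSeq n) ω‖ₑ ^ (ENNReal.toReal 2)
        = ENNReal.ofReal ((elemIntegral M (HsSeq n) ω) ^ 2) := by
      intro ω
      rw [← ofReal_norm,
        show (ENNReal.toReal 2) = ((2:ℕ):ℝ) by norm_num,
        ENNReal.ofReal_rpow_of_nonneg (norm_nonneg _) (by positivity)]
      congr 1
      rw [Real.rpow_natCast, Real.norm_eq_abs, sq_abs]
    have heq : eLpNorm (elemIntegral M (HsSeq n)) 2 P
        = ENNReal.ofReal (∫ ω, (elemIntegral M (HsSeq n) ω) ^ 2 ∂P) ^ (1/2 : ℝ) := by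
      rw [eLpNorm_eq_lintegral_rpow_enorm_toReal two_ne_zero ENNReal.ofNat_ne_top]
      rw [lintegral_congr hpt]
      rw [← ofReal_integral_eq_lintegral_ofReal hint
        (Eventually.of_forall fun ω => sq_nonneg _)]
      norm_num
    rw [heq]
    refine ENNReal.rpow_le_rpow ?_ (by norm_num)
    exact ENNReal.ofReal_le_ofReal ((hmain n).2)
  have hlim : Tendsto (fun n => ENNReal.ofReal ((cs n)^2 * K) ^ (1/2:ℝ)) atTop (𝓝 0) := by
    have h1 : Tendsto (fun n => (cs n)^2 * K) atTop (𝓝 0) := by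
      have h := (hcs.mul hcs).mul_const K
      simp only [mul_zero, zero_mul] at h
      have hfe : (fun n => (cs n)^2 * K) = fun n => (cs n * cs n) * K := by
        funext n
        ring
      rw [hfe]
      exact h
    have h2 : Tendsto (fun n => ENNReal.ofReal ((cs n)^2 * K)) atTop (𝓝 0) := by
      have h := (ENNReal.continuous_ofReal.tendsto 0).comp h1
      simpa [Function.comp_def] using h
    have h3 := (ENNReal.continuous_rpow_const (y := (1/2:ℝ))).tendsto 0 |>.comp h2
    simpa [Function.comp_def, ENNReal.zero_rpow_of_pos (by norm_num : (0:ℝ) < 1/2)] using h3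
  exact tendsto_of_tendsto_of_tendsto_of_le_of_le tendsto_const_nhds hlim
    (fun n => bot_le) hle


end BD
end
end
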